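/- arXiv:1204.1349 — 3 statements merged into one kernel-verified Lean document; each statement's English description precedes it below -/
import Mathlib

section
/- A multigraph G = (V,E) is a P(2,1)-graph if and only if E is the edge-disjoint union of the edge set of a spanning tree of G and the edge set of a spanning connected map-graph of G. -/
/-! ### Multigraphs: finite vertex set `V`, finite edge set `E`; each edge `e` has
endpoints `src e` and `dst e` (loops and parallel edges are allowed). -/

structure Multigraph (V E : Type) where
  src : E → V
  dst : E → V

namespace Multigraph

variable {V E : Type}

/-- `i(X)`: the number of edges both of whose endpoints lie in `X`. -/
def iCount [Fintype E] [DecidableEq V] (G : Multigraph V E) (X : Finset V) : ℕ :=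
  (Finset.univ.filter fun e => G.src e ∈ X ∧ G.dst e ∈ X).card

/-- The degree of a vertex (a loop contributes 2). -/
def degree [Fintype E] [DecidableEq V] (G : Multigraph V E) (v : V) : ℕ :=
  (Finset.univ.filter fun e => G.src e = v).card +
    (Finset.univ.filter fun e => G.dst e = v).card

/-- The set of neighbours of a vertex. -/
def neighborSet (G : Multigraph V E) (v : V) : Set V :=
  {w | ∃ e, (G.src e = v ∧ G.dst e = w) ∨ (G.src e = w ∧ G.dst e = v)}

/-- `(k,ℓ)`-sparsity: `i(X) ≤ k|X| − ℓ` for every `X ⊆ V` spanning at least one edge. -/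
def Sparse [Fintype E] [DecidableEq V] (G : Multigraph V E) (k l : ℤ) : Prop :=
  ∀ X : Finset V, (∃ e, G.src e ∈ X ∧ G.dst e ∈ X) →
    (G.iCount X : ℤ) ≤ k * (X.card : ℤ) - l

/-- `(k,ℓ)`-tightness: `(k,ℓ)`-sparse and `|E| = k|V| − ℓ`. -/
def Tight [Fintype V] [Fintype E] [DecidableEq V] (G : Multigraph V E) (k l : ℤ) : Prop :=
  G.Sparse k l ∧ (Fintype.card E : ℤ) = k * (Fintype.card V : ℤ) - l

/-- Delete a single edge. -/
def deleteEdge (G : Multigraph V E) (e₀ : E) : Multigraph V {e : E // e ≠ e₀} :=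
  ⟨fun e => G.src e.1, fun e => G.dst e.1⟩

/-- Delete a vertex together with all edges incident to it. -/
def deleteVertex (G : Multigraph V E) (v : V) :
    Multigraph {w : V // w ≠ v} {e : E // G.src e ≠ v ∧ G.dst e ≠ v} :=
  ⟨fun e => ⟨G.src e.1, e.2.1⟩, fun e => ⟨G.dst e.1, e.2.2⟩⟩

/-- Add one new edge with endpoints `u` and `w`. -/
def addEdge (G : Multigraph V E) (u w : V) : Multigraph V (E ⊕ Unit) :=
  ⟨Sum.elim G.src fun _ => u, Sum.elim G.dst fun _ => w⟩

/-- The subgraph induced by a set of vertices `X`. -/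
def induce (G : Multigraph V E) (X : Finset V) :
    Multigraph {v : V // v ∈ X} {e : E // G.src e ∈ X ∧ G.dst e ∈ X} :=
  ⟨fun e => ⟨G.src e.1, e.2.1⟩, fun e => ⟨G.dst e.1, e.2.2⟩⟩

/-- `G` is a `P(2,1)`-graph: `(2,1)`-tight and some edge-deleted graph is `(2,2)`-tight. -/
def IsP21 [Fintype V] [Fintype E] [DecidableEq V] [DecidableEq E] (G : Multigraph V E) : Prop :=
  G.Tight 2 1 ∧ ∃ e : E, (G.deleteEdge e).Tight 2 2

/-- `G` is a `(2,2)`-circuit: `|E| = 2|V| − 1` and every edge-deleted graph is `(2,2)`-tight. -/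
def IsCircuit22 [Fintype V] [Fintype E] [DecidableEq V] [DecidableEq E]
    (G : Multigraph V E) : Prop :=
  (Fintype.card E : ℤ) = 2 * (Fintype.card V : ℤ) - 1 ∧
    ∀ e : E, (G.deleteEdge e).Tight 2 2

/-- `X` is an over-critical set (`i(X) = 2|X| − 1`) of minimum cardinality. -/
def IsMinOverCritical [Fintype E] [DecidableEq V] (G : Multigraph V E) (X : Finset V) : Prop :=
  (G.iCount X : ℤ) = 2 * (X.card : ℤ) - 1 ∧
    ∀ Y : Finset V, (G.iCount Y : ℤ) = 2 * (Y.card : ℤ) - 1 → X.card ≤ Y.card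

/-- `G` is (a copy of) `K₂³`: two distinct vertices joined by three parallel edges. -/
def IsK23 [Fintype E] (G : Multigraph V E) : Prop :=
  ∃ a b : V, a ≠ b ∧ (∀ v : V, v = a ∨ v = b) ∧ Fintype.card E = 3 ∧
    ∀ e : E, (G.src e = a ∧ G.dst e = b) ∨ (G.src e = b ∧ G.dst e = a)

/-- Adjacency via an edge belonging to the edge subset `F`. -/
def AdjOn (G : Multigraph V E) (F : Set E) (u w : V) : Prop :=
  ∃ e ∈ F, (G.src e = u ∧ G.dst e = w) ∨ (G.src e = w ∧ G.dst e = u)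

/-- Connectivity of the multigraph. -/
def Connected (G : Multigraph V E) : Prop :=
  Nonempty V ∧ ∀ u w : V, Relation.ReflTransGen (G.AdjOn Set.univ) u w

/-- 2-edge-connectivity: connected, and still connected after deleting any one edge. -/
def TwoEdgeConnected (G : Multigraph V E) : Prop :=
  G.Connected ∧ ∀ e₀ : E, ∀ u w : V, Relation.ReflTransGen (G.AdjOn {e | e ≠ e₀}) u w

/-- Adjacency inside the induced subgraph on the vertex set `X`. -/
def AdjIn (G : Multigraph V E) (X : Set V) (u w : V) : Prop :=
  u ∈ X ∧ w ∈ X ∧ ∃ e, (G.src e = u ∧ G.dst e = w) ∨ (G.src e = w ∧ G.dst e = u)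

/-- Connectivity of the induced subgraph on the vertex set `X`. -/
def ConnectedOn (G : Multigraph V E) (X : Set V) : Prop :=
  ∀ u ∈ X, ∀ w ∈ X, Relation.ReflTransGen (G.AdjIn X) u w

/-- `T` is the edge set of a spanning tree of `G`:
the spanning subgraph with edge set `T` is connected and `|T| = |V| − 1`. -/
def IsSpanningTree [Fintype V] (G : Multigraph V E) (T : Finset E) : Prop :=
  (∀ u w : V, Relation.ReflTransGen (G.AdjOn (T : Set E)) u w) ∧ T.card + 1 = Fintype.card V

/-- `M` is the edge set of a spanning connected map-graph of `G`:
the spanning subgraph with edge set `M` is connected and has exactly `|V|` edges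
(equivalently, it is connected with exactly one cycle). -/
def IsConnectedSpanningMapGraph [Fintype V] (G : Multigraph V E) (M : Finset E) : Prop :=
  (∀ u w : V, Relation.ReflTransGen (G.AdjOn (M : Set E)) u w) ∧ M.card = Fintype.card V

/-- `(X, F)` describes a subgraph of `G`: every edge of `F` has both endpoints in `X`. -/
def IsSubgraphOn (G : Multigraph V E) (X : Finset V) (F : Finset E) : Prop :=
  ∀ e ∈ F, G.src e ∈ X ∧ G.dst e ∈ X

section Aux

set_option linter.unusedSectionVars false

variable (G : Multigraph V E)

def conn (F : Set E) : V → V → Prop := Relation.ReflTransGen (G.AdjOn F)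

theorem adjOn_symm {F : Set E} {u w : V} (h : G.AdjOn F u w) : G.AdjOn F w u := by
  obtain ⟨e, he, h | h⟩ := h
  exacts [⟨e, he, Or.inr h⟩, ⟨e, he, Or.inl h⟩]

theorem adjOn_mono {F F' : Set E} (hFF : F ⊆ F') {u w : V} (h : G.AdjOn F u w) :
    G.AdjOn F' u w := by
  obtain ⟨e, he, h⟩ := h
  exact ⟨e, hFF he, h⟩

theorem conn_refl {F : Set E} (u : V) : G.conn F u u := Relation.ReflTransGen.refl

theorem conn_symm {F : Set E} {u w : V} (h : G.conn F u w) : G.conn F w u :=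
  (@Relation.ReflTransGen.stdSymm _ _ ⟨fun _ _ h => G.adjOn_symm h⟩).symm _ _ h

theorem conn_trans {F : Set E} {u w x : V} (h : G.conn F u w) (h' : G.conn F w x) :
    G.conn F u x := h.trans h'

theorem conn_mono {F F' : Set E} (hFF : F ⊆ F') {u w : V} (h : G.conn F u w) :
    G.conn F' u w := Relation.ReflTransGen.mono (fun _ _ h => G.adjOn_mono hFF h) _ _ h

theorem conn_single {F : Set E} {e : E} (he : e ∈ F) : G.conn F (G.src e) (G.dst e) :=
  Relation.ReflTransGen.single ⟨e, he, Or.inl ⟨rfl, rfl⟩⟩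

theorem conn_empty {u w : V} (h : G.conn (∅ : Set E) u w) : u = w := by
  induction h with
  | refl => rfl
  | tail _ h2 ih => obtain ⟨e, he, _⟩ := h2; exact absurd he (Set.notMem_empty e)

/-- A path avoiding a vertex outside `X` cannot start there when all edges lie in `X`. -/
theorem conn_eq_of_not_mem {X : Set V} {F : Set E}
    (hF : ∀ e ∈ F, G.src e ∈ X ∧ G.dst e ∈ X) {u w : V}
    (h : G.conn F u w) (hu : u ∉ X) : u = w := by
  revert hu
  induction h using Relation.ReflTransGen.head_induction_on with
  | refl => exact fun _ => rfl
  | head h1 _ _ =>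
    intro hu
    obtain ⟨e, he, h | h⟩ := h1
    · exact absurd (h.1 ▸ (hF e he).1) hu
    · exact absurd (h.2 ▸ (hF e he).2) hu

theorem conn_insert_cases {F : Set E} {e : E} {u w : V} (h : G.conn (insert e F) u w) :
    G.conn F u w ∨ (G.conn F u (G.src e) ∧ G.conn F (G.dst e) w) ∨
      (G.conn F u (G.dst e) ∧ G.conn F (G.src e) w) := by
  induction h with
  | refl => exact Or.inl (G.conn_refl u)
  | tail _ h2 ih =>
    obtain ⟨e', he', hend⟩ := h2
    rcases he' with rfl | he'
    · rcases hend with ⟨hb, hc⟩ | ⟨hb, hc⟩ <;> rw [hb, hc] at ih ⊢ <;>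
        rcases ih with h1 | ⟨h1, h2⟩ | ⟨h1, h2⟩ <;>
        first
          | exact Or.inl h1
          | exact Or.inr (Or.inl ⟨h1, G.conn_refl _⟩)
          | exact Or.inr (Or.inr ⟨h1, G.conn_refl _⟩)
    · have hstep : G.conn F _ _ := Relation.ReflTransGen.single ⟨e', he', hend⟩
      rcases ih with h1 | ⟨h1, h2⟩ | ⟨h1, h2⟩
      · exact Or.inl (h1.trans hstep)
      · exact Or.inr (Or.inl ⟨h1, h2.trans hstep⟩)
      · exact Or.inr (Or.inr ⟨h1, h2.trans hstep⟩)


def connSetoid (F : Set E) : Setoid V :=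
  ⟨G.conn F, ⟨fun u => G.conn_refl u, fun h => G.conn_symm h, fun h h' => h.trans h'⟩⟩

/-- The number of connected components of the spanning subgraph with edge set `F`. -/
noncomputable def ncomp (F : Set E) : ℕ := Nat.card (Quotient (G.connSetoid F))

theorem ncomp_empty [Fintype V] : G.ncomp (∅ : Set E) = Fintype.card V := by
  rw [ncomp, ← Nat.card_eq_fintype_card]
  refine (Nat.card_eq_of_bijective (Quotient.mk (G.connSetoid ∅)) ⟨?_, ?_⟩).symm
  · intro a b h
    exact G.conn_empty (Quotient.exact h)
  · exact Quotient.exists_rep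

/-- The natural surjection between component quotients. -/
def quotMap {F F' : Set E} (h : F ⊆ F') :
    Quotient (G.connSetoid F) → Quotient (G.connSetoid F') :=
  Quotient.map' id (fun _ _ hc => G.conn_mono h hc)

theorem quotMap_surj {F F' : Set E} (h : F ⊆ F') : Function.Surjective (G.quotMap h) := by
  intro x
  obtain ⟨a, rfl⟩ := Quotient.exists_rep x
  exact ⟨Quotient.mk _ a, rfl⟩

theorem card_lt_helper {α β : Type} [Finite α] (f : α → β) (hs : Function.Surjective f)
    {a b : α} (hab : a ≠ b) (hf : f a = f b) : Nat.card β < Nat.card α := by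
  have hfb : Finite β := Finite.of_surjective f hs
  cases nonempty_fintype α
  cases nonempty_fintype β
  rw [Nat.card_eq_fintype_card, Nat.card_eq_fintype_card]
  rcases lt_or_eq_of_le (Fintype.card_le_of_surjective f hs) with h | h
  · exact h
  · exact absurd (((Fintype.bijective_iff_surjective_and_card f).2 ⟨hs, h.symm⟩).1 hf) hab

theorem ncomp_mono [Finite V] {F F' : Set E} (hFF : F ⊆ F') :
    G.ncomp F' ≤ G.ncomp F := by
  have : Finite (Quotient (G.connSetoid F)) := Quotient.finite _
  exact Nat.card_le_card_of_surjective _ (G.quotMap_surj hFF)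

theorem ncomp_le_insert [Finite V] (F : Set E) (e : E) :
    G.ncomp F ≤ G.ncomp (insert e F) + 1 := by
  classical
  have h1 : Finite (Quotient (G.connSetoid F)) := Quotient.finite _
  have h2 : Finite (Quotient (G.connSetoid (insert e F))) := Quotient.finite _
  have hsub : F ⊆ insert e F := Set.subset_insert e F
  have hpair : ∀ x y : Quotient (G.connSetoid F), G.quotMap hsub x = G.quotMap hsub y →
      x = Quotient.mk _ (G.src e) ∧ y = Quotient.mk _ (G.dst e) ∨
      x = Quotient.mk _ (G.dst e) ∧ y = Quotient.mk _ (G.src e) ∨ x = y := by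
    intro x y
    induction x using Quotient.inductionOn
    induction y using Quotient.inductionOn
    intro hg
    have hc : G.conn (insert e F) _ _ := Quotient.exact hg
    rcases G.conn_insert_cases hc with h | ⟨ha, hb⟩ | ⟨ha, hb⟩
    · exact Or.inr (Or.inr (Quotient.sound h))
    · exact Or.inl ⟨Quotient.sound ha, Quotient.sound (G.conn_symm hb)⟩
    · exact Or.inr (Or.inl ⟨Quotient.sound ha, Quotient.sound (G.conn_symm hb)⟩)
  have hinj : Function.Injective (fun x : Quotient (G.connSetoid F) =>
      if x = Quotient.mk _ (G.src e)
      then (Sum.inr () : Quotient (G.connSetoid (insert e F)) ⊕ Unit)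
      else Sum.inl (G.quotMap hsub x)) := by
    intro x y h
    by_cases hx : x = Quotient.mk _ (G.src e) <;> by_cases hy : y = Quotient.mk _ (G.src e) <;>
      simp [hx, hy] at h
    · exact hx.trans hy.symm
    · rcases hpair x y h with ⟨ha, hb⟩ | ⟨ha, hb⟩ | ha
      · exact absurd ha hx
      · exact absurd hb hy
      · exact ha
  calc G.ncomp F ≤ Nat.card (Quotient (G.connSetoid (insert e F)) ⊕ Unit) :=
        Nat.card_le_card_of_injective _ hinj
    _ = G.ncomp (insert e F) + 1 := by simp [Nat.card_sum, ncomp]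

theorem card_le_ncomp_add [Fintype V] [Fintype E] [DecidableEq E] (F : Finset E) :
    Fintype.card V ≤ G.ncomp ↑F + F.card := by
  classical
  induction F using Finset.induction_on with
  | empty => simp [G.ncomp_empty]
  | @insert e F he ih =>
    have := G.ncomp_le_insert (↑F) e
    rw [Finset.card_insert_of_notMem he, Finset.coe_insert]
    omega

theorem ncomp_le_union_add [Fintype V] [Fintype E] [DecidableEq E] (F D : Finset E) :
    G.ncomp ↑F ≤ G.ncomp ↑(F ∪ D) + D.card := by
  classical
  induction D using Finset.induction_on with
  | empty => simp
  | @insert e D he ih =>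
    have h1 : G.ncomp ↑(F ∪ D) ≤ G.ncomp ↑(F ∪ insert e D) + 1 := by
      have : (↑(F ∪ insert e D) : Set E) = insert e ↑(F ∪ D) := by
        simp [Finset.insert_union, Finset.union_insert]
      rw [this]
      exact G.ncomp_le_insert _ e
    have h2 : D.card + 1 = (insert e D).card := (Finset.card_insert_of_notMem he).symm
    omega

theorem ncomp_le_of_subset [Fintype V] [Fintype E] [DecidableEq E] {F' F : Finset E}
    (h : F' ⊆ F) : G.ncomp ↑F' ≤ G.ncomp ↑F + (F.card - F'.card) := by
  have := G.ncomp_le_union_add F' (F \ F')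
  rw [Finset.union_sdiff_of_subset h, Finset.card_sdiff_of_subset h] at this
  exact this

theorem ncomp_eq_one [Fintype V] [Nonempty V] {F : Set E}
    (h : ∀ u w : V, G.conn F u w) : G.ncomp F = 1 := by
  rw [ncomp, Nat.card_eq_one_iff_unique]
  constructor
  · constructor
    intro x y
    induction x using Quotient.inductionOn
    induction y using Quotient.inductionOn
    exact Quotient.sound (h _ _)
  · exact ⟨Quotient.mk _ (Classical.arbitrary V)⟩

theorem conn_of_ncomp_eq_one [Fintype V] {F : Set E} (h : G.ncomp F = 1)
    (u w : V) : G.conn F u w := by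
  rw [ncomp, Nat.card_eq_one_iff_unique] at h
  have := h.1
  exact Quotient.exact (Subsingleton.elim (Quotient.mk (G.connSetoid F) u) (Quotient.mk _ w))

theorem ncomp_ge_of_inside [Fintype V] [DecidableEq V] {X : Finset V} (hX : X.Nonempty)
    {F : Set E} (hF : ∀ e ∈ F, G.src e ∈ X ∧ G.dst e ∈ X) :
    Fintype.card V - X.card + 1 ≤ G.ncomp F := by
  classical
  obtain ⟨x₀, hx₀⟩ := hX
  set s := G.connSetoid F
  have hF' : ∀ e ∈ F, G.src e ∈ (↑X : Set V) ∧ G.dst e ∈ (↑X : Set V) := by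
    intro e he; exact_mod_cast hF e he
  have hinj : Function.Injective (fun x : Option {w : V // w ∉ X} =>
      match x with
      | none => Quotient.mk s x₀
      | some w => Quotient.mk s w.1) := by
    intro x y h
    match x, y with
    | none, none => rfl
    | some a, none =>
      exfalso
      have hc : G.conn F a.1 x₀ := Quotient.exact h
      have := G.conn_eq_of_not_mem hF' hc (by exact_mod_cast a.2)
      exact a.2 (this ▸ hx₀)
    | none, some a =>
      exfalso
      have hc : G.conn F a.1 x₀ := Quotient.exact h.symm
      have := G.conn_eq_of_not_mem hF' hc (by exact_mod_cast a.2)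
      exact a.2 (this ▸ hx₀)
    | some a, some b =>
      have hc : G.conn F a.1 b.1 := Quotient.exact h
      have := G.conn_eq_of_not_mem hF' hc (by exact_mod_cast a.2)
      simp [Subtype.ext this]
  have hcard := Nat.card_le_card_of_injective _ hinj
  have h2 : Nat.card (Option {w : V // w ∉ X}) = Fintype.card V - X.card + 1 := by
    rw [Nat.card_eq_fintype_card, Fintype.card_option, Fintype.card_subtype_compl,
      Fintype.card_coe]
  rw [h2] at hcard
  exact hcard


theorem conn_lift {V' E' : Type} (G' : Multigraph V' E') (f : V' → V) {F' : Set E'}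
    {F : Set E} (hstep : ∀ a b, G'.AdjOn F' a b → G.conn F (f a) (f b)) :
    ∀ {a b : V'}, G'.conn F' a b → G.conn F (f a) (f b) := by
  intro a b h
  induction h with
  | refl => exact G.conn_refl _
  | tail _ h2 ih => exact ih.trans (hstep _ _ h2)

variable [Fintype V] [Fintype E] [DecidableEq V] [DecidableEq E]

theorem tree_inside_bound {T : Finset E}
    (hconn : ∀ u w : V, G.conn ↑T u w) (hcard : T.card + 1 = Fintype.card V)
    {X : Finset V} (hX : X.Nonempty) :
    (T.filter fun e => G.src e ∈ X ∧ G.dst e ∈ X).card + 1 ≤ X.card := by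
  classical
  have hne : Nonempty V := Fintype.card_pos_iff.mp (by omega)
  set F' : Finset E := T.filter fun e => G.src e ∈ X ∧ G.dst e ∈ X with hF'
  have hsub : F' ⊆ T := Finset.filter_subset _ _
  have h1 : G.ncomp ↑F' ≤ G.ncomp ↑T + (T.card - F'.card) := G.ncomp_le_of_subset hsub
  have h2 : G.ncomp ↑T = 1 := G.ncomp_eq_one hconn
  have h3 : Fintype.card V - X.card + 1 ≤ G.ncomp ↑F' := by
    refine G.ncomp_ge_of_inside hX ?_
    intro e he
    rw [Finset.mem_coe, hF', Finset.mem_filter] at he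
    exact he.2
  have h4 : F'.card ≤ T.card := Finset.card_le_card hsub
  have h5 : X.card ≤ Fintype.card V := Finset.card_le_univ X
  omega

theorem bridge_card {F : Finset E}
    (h : ∀ e ∈ F, ¬ G.conn ↑(F.erase e) (G.src e) (G.dst e)) :
    G.ncomp ↑F + F.card = Fintype.card V := by
  classical
  induction F using Finset.strongInductionOn with
  | _ F ih =>
    rcases Finset.eq_empty_or_nonempty F with rfl | ⟨e, he⟩
    · simpa using G.ncomp_empty
    · have hsub : F.erase e ⊂ F := Finset.erase_ssubset he
      have hprev : G.ncomp ↑(F.erase e) + (F.erase e).card = Fintype.card V := by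
        refine ih _ hsub ?_
        intro e' he'
        refine fun hc => h e' (Finset.mem_of_mem_erase he') ?_
        exact G.conn_mono (by
          intro x hx
          rw [Finset.coe_erase] at hx ⊢
          exact ⟨Finset.mem_of_mem_erase (by exact hx.1), hx.2⟩) hc
      have hle : G.ncomp ↑(F.erase e) ≤ G.ncomp ↑F + 1 := by
        have : (↑F : Set E) = insert e ↑(F.erase e) := by
          rw [Finset.coe_erase]
          rw [Set.insert_diff_singleton]
          simp [Set.insert_eq_self.2 (Finset.mem_coe.2 he)]
        rw [this]
        exact G.ncomp_le_insert _ e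
      have hlt : G.ncomp ↑F < G.ncomp ↑(F.erase e) := by
        have hq : G.quotMap (F := (↑(F.erase e) : Set E)) (F' := ↑F)
            (by exact_mod_cast Finset.coe_subset.2 (Finset.erase_subset e F))
            (Quotient.mk _ (G.src e)) = Quotient.mk _ (G.dst e) := by
          exact Quotient.sound (G.conn_single (Finset.mem_coe.2 he))
        refine card_lt_helper _ (G.quotMap_surj _) (a := Quotient.mk _ (G.src e))
          (b := Quotient.mk _ (G.dst e)) ?_ hq
        intro hcon
        exact h e he (Quotient.exact hcon)
      have hce : (F.erase e).card + 1 = F.card := Finset.card_erase_add_one he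
      omega

theorem exists_removable {F : Finset E} (hconn : ∀ u w : V, G.conn ↑F u w)
    [Nonempty V] (hbig : Fintype.card V ≤ F.card) :
    ∃ e ∈ F, ∀ u w : V, G.conn ↑(F.erase e) u w := by
  classical
  by_contra hcon
  push_neg at hcon
  have h : ∀ e ∈ F, ¬ G.conn ↑(F.erase e) (G.src e) (G.dst e) := by
    intro e he hc
    obtain ⟨u, w, huw⟩ := hcon e he
    refine huw ?_
    have hins : (↑F : Set E) = insert e ↑(F.erase e) := by
      rw [Finset.coe_erase, Set.insert_diff_singleton]
      simp [Set.insert_eq_self.2 (Finset.mem_coe.2 he)]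
    have h2 := hconn u w
    rw [hins] at h2
    rcases G.conn_insert_cases h2 with h3 | ⟨h3, h4⟩ | ⟨h3, h4⟩
    · exact h3
    · exact (h3.trans hc).trans h4
    · exact (h3.trans (G.conn_symm hc)).trans h4
  have := G.bridge_card h
  have h1 : G.ncomp ↑F = 1 := G.ncomp_eq_one hconn
  omega

theorem exists_tree_subset {F : Finset E} (hconn : ∀ u w : V, G.conn ↑F u w)
    [Nonempty V] :
    ∃ T ⊆ F, (∀ u w : V, G.conn ↑T u w) ∧ T.card + 1 = Fintype.card V := by
  classical
  revert hconn
  induction F using Finset.strongInductionOn with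
  | _ F ih =>
    intro hconn
    rcases le_or_gt (Fintype.card V) F.card with hbig | hsmall
    · obtain ⟨e, he, hc⟩ := G.exists_removable hconn hbig
      obtain ⟨T, hT1, hT2, hT3⟩ := ih _ (Finset.erase_ssubset he) hc
      exact ⟨T, fun x hx => Finset.mem_of_mem_erase (hT1 hx), hT2, hT3⟩
    · have h1 : G.ncomp ↑F = 1 := G.ncomp_eq_one hconn
      have h2 := G.card_le_ncomp_add F
      exact ⟨F, Finset.Subset.refl F, hconn, by omega⟩


theorem filter_subtype_card {p : E → Prop} [DecidablePred p] (q : E → Prop) [DecidablePred q] :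
    (Finset.univ.filter fun e : {x : E // p x} => q e.1).card
      = (Finset.univ.filter fun e : E => p e ∧ q e).card := by
  refine Finset.card_bij (fun e _ => e.1) ?_ ?_ ?_
  · intro a ha
    rw [Finset.mem_filter] at ha ⊢
    exact ⟨Finset.mem_univ _, a.2, ha.2⟩
  · intro a _ b _ h
    exact Subtype.ext h
  · intro b hb
    rw [Finset.mem_filter] at hb
    exact ⟨⟨b, hb.2.1⟩, Finset.mem_filter.2 ⟨Finset.mem_univ _, hb.2.2⟩, rfl⟩

theorem filter_sum_card {α : Type} [Fintype α] (P : α ⊕ Unit → Prop) [DecidablePred P] :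
    ((Finset.univ : Finset (α ⊕ Unit)).filter P).card
      = ((Finset.univ : Finset α).filter fun a => P (Sum.inl a)).card
        + (if P (Sum.inr ()) then 1 else 0) := by
  rw [Finset.card_filter, Finset.card_filter, Fintype.sum_sum_type]
  simp only [Finset.sum_boole, Finset.sum_ite_eq]
  norm_num
  rw [Finset.filter_singleton]
  split <;> simp

theorem mem_image_val {p : V → Prop} [DecidablePred p] {X' : Finset {w : V // p w}} {a : V}
    (h : p a) : a ∈ X'.image Subtype.val ↔ ⟨a, h⟩ ∈ X' := by
  constructor
  · intro ha
    obtain ⟨b, hb, hba⟩ := Finset.mem_image.1 ha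
    exact (Subtype.ext hba : b = ⟨a, h⟩) ▸ hb
  · intro ha
    exact Finset.mem_image.2 ⟨_, ha, rfl⟩

theorem no_loops (hs : G.Sparse 2 2) (e : E) : G.src e ≠ G.dst e := by
  intro h
  have hmem : G.dst e ∈ ({G.src e} : Finset V) := by rw [← h]; exact Finset.mem_singleton_self _
  have h1 := hs {G.src e} ⟨e, Finset.mem_singleton_self _, hmem⟩
  have h2 : 1 ≤ G.iCount {G.src e} := by
    rw [iCount]
    exact Finset.card_pos.2 ⟨e, Finset.mem_filter.2 ⟨Finset.mem_univ _,
      Finset.mem_singleton_self _, hmem⟩⟩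
  rw [Finset.card_singleton] at h1
  omega

/-- The set of edges incident to `v` (in a loopless graph). -/
def inc (v : V) : Finset E := Finset.univ.filter fun e => G.src e = v ∨ G.dst e = v

theorem inc_card (hl : ∀ e : E, G.src e ≠ G.dst e) (v : V) :
    (G.inc v).card = G.degree v := by
  rw [inc, degree, Finset.filter_or]
  refine Finset.card_union_of_disjoint ?_
  rw [Finset.disjoint_left]
  intro e he1 he2
  rw [Finset.mem_filter] at he1 he2
  exact hl e (he1.2.trans he2.2.symm)

theorem iCount_erase (v : V) :
    G.iCount (Finset.univ.erase v) + (G.inc v).card = Fintype.card E := by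
  rw [iCount, inc]
  have heq : (Finset.univ.filter fun e =>
        G.src e ∈ Finset.univ.erase v ∧ G.dst e ∈ Finset.univ.erase v)
      = Finset.univ \ (Finset.univ.filter fun e => G.src e = v ∨ G.dst e = v) := by
    ext e
    simp [not_or]
  rw [heq, Finset.card_sdiff_of_subset (Finset.filter_subset _ _), Finset.card_univ]
  have := Finset.card_filter_le (Finset.univ : Finset E)
    (fun e => G.src e = v ∨ G.dst e = v)
  rw [Finset.card_univ] at this
  omega

theorem sum_degree : ∑ v : V, G.degree v = 2 * Fintype.card E := by
  unfold degree
  rw [Finset.sum_add_distrib]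
  have h1 : ∑ v : V, (Finset.univ.filter fun e => G.src e = v).card = Fintype.card E := by
    rw [← Finset.card_univ,
      Finset.card_eq_sum_card_fiberwise (f := G.src) (fun e _ => Finset.mem_univ (G.src e))]
  have h2 : ∑ v : V, (Finset.univ.filter fun e => G.dst e = v).card = Fintype.card E := by
    rw [← Finset.card_univ,
      Finset.card_eq_sum_card_fiberwise (f := G.dst) (fun e _ => Finset.mem_univ (G.dst e))]
  omega

theorem spans_of_iCount_pos {X : Finset V} (h : 0 < G.iCount X) :
    ∃ e, G.src e ∈ X ∧ G.dst e ∈ X := by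
  obtain ⟨e, he⟩ := Finset.card_pos.1 h
  rw [Finset.mem_filter] at he
  exact ⟨e, he.2⟩

theorem two_le_degree (hs : G.Sparse 2 2)
    (hE : (Fintype.card E : ℤ) = 2 * Fintype.card V - 2)
    (hn : 2 ≤ Fintype.card V) (v : V) : 2 ≤ G.degree v := by
  by_contra hcon
  push_neg at hcon
  have hinc : (G.inc v).card ≤ G.degree v := G.inc_card (G.no_loops hs) v ▸ le_refl _
  have herase := G.iCount_erase v
  have hXcard : (Finset.univ.erase v).card = Fintype.card V - 1 := by
    rw [Finset.card_erase_of_mem (Finset.mem_univ v), Finset.card_univ]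
  have hpos : 0 < G.iCount (Finset.univ.erase v) := by omega
  have hsp := hs _ (G.spans_of_iCount_pos hpos)
  rw [hXcard] at hsp
  omega

theorem exists_small_degree [Nonempty V]
    (hE : (Fintype.card E : ℤ) = 2 * Fintype.card V - 2) :
    ∃ v : V, G.degree v ≤ 3 := by
  by_contra hcon
  push_neg at hcon
  have hsum : Finset.univ.card • 4 ≤ ∑ v : V, G.degree v :=
    Finset.card_nsmul_le_sum Finset.univ _ 4 (fun v _ => hcon v)
  rw [G.sum_degree, Finset.card_univ, smul_eq_mul] at hsum
  have hpos : 1 ≤ Fintype.card V := Fintype.card_pos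
  omega

theorem sparse_bound (hs : G.Sparse 2 2) {Y : Finset V} (hY : Y.Nonempty) :
    (G.iCount Y : ℤ) ≤ 2 * Y.card - 2 := by
  by_cases h : ∃ e, G.src e ∈ Y ∧ G.dst e ∈ Y
  · exact hs Y h
  · push_neg at h
    have h0 : G.iCount Y = 0 := by
      rw [iCount, Finset.card_eq_zero, Finset.filter_eq_empty_iff]
      intro e _ he
      exact h e he.1 he.2
    have h1 : 1 ≤ Y.card := hY.card_pos
    omega

theorem iCount_union_inter (X Y : Finset V) :
    G.iCount X + G.iCount Y ≤ G.iCount (X ∪ Y) + G.iCount (X ∩ Y) := by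
  unfold iCount
  have key := Finset.card_union_add_card_inter
    (Finset.univ.filter fun e => G.src e ∈ X ∧ G.dst e ∈ X)
    (Finset.univ.filter fun e => G.src e ∈ Y ∧ G.dst e ∈ Y)
  have h1 : ((Finset.univ.filter fun e => G.src e ∈ X ∧ G.dst e ∈ X)
      ∪ (Finset.univ.filter fun e => G.src e ∈ Y ∧ G.dst e ∈ Y)).card
      ≤ (Finset.univ.filter fun e => G.src e ∈ X ∪ Y ∧ G.dst e ∈ X ∪ Y).card := by
    refine Finset.card_le_card ?_
    intro e he
    rw [Finset.mem_union, Finset.mem_filter, Finset.mem_filter] at he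
    rw [Finset.mem_filter]
    rcases he with he | he <;>
      simp [Finset.mem_union, he.2.1, he.2.2]
  have h2 : ((Finset.univ.filter fun e => G.src e ∈ X ∧ G.dst e ∈ X)
      ∩ (Finset.univ.filter fun e => G.src e ∈ Y ∧ G.dst e ∈ Y))
      = Finset.univ.filter fun e => G.src e ∈ X ∩ Y ∧ G.dst e ∈ X ∩ Y := by
    ext e
    simp only [Finset.mem_inter, Finset.mem_filter, Finset.mem_univ, true_and]
    tauto
  rw [h2] at key
  omega

theorem good_union (hs : G.Sparse 2 2) {v : V} {Y Z : Finset V}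
    (hY : v ∉ Y ∧ Y.Nonempty ∧ 2 * (Y.card : ℤ) - 2 ≤ G.iCount Y)
    (hZ : v ∉ Z ∧ Z.Nonempty ∧ 2 * (Z.card : ℤ) - 2 ≤ G.iCount Z)
    (hmeet : (Y ∩ Z).Nonempty) :
    v ∉ Y ∪ Z ∧ (Y ∪ Z).Nonempty ∧ 2 * ((Y ∪ Z).card : ℤ) - 2 ≤ G.iCount (Y ∪ Z) := by
  refine ⟨fun h => (Finset.mem_union.1 h).elim hY.1 hZ.1, hY.2.1.mono Finset.subset_union_left, ?_⟩
  have h1 := G.iCount_union_inter Y Z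
  have h2 := G.sparse_bound hs hmeet
  have h3 := Finset.card_union_add_card_inter Y Z
  have h4 := hY.2.2
  have h5 := hZ.2.2
  have h3' : ((Y ∪ Z).card : ℤ) + ((Y ∩ Z).card : ℤ) = (Y.card : ℤ) + (Z.card : ℤ) := by
    exact_mod_cast congrArg (Nat.cast : ℕ → ℤ) h3
  have h1' : (G.iCount Y : ℤ) + (G.iCount Z : ℤ)
      ≤ (G.iCount (Y ∪ Z) : ℤ) + (G.iCount (Y ∩ Z) : ℤ) := by exact_mod_cast h1
  linarith

theorem iCount_insert_three {U : Finset V} {v : V} (hv : v ∉ U) {e₁ e₂ e₃ : E}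
    (h12 : e₁ ≠ e₂) (h13 : e₁ ≠ e₃) (h23 : e₂ ≠ e₃)
    (hin : ∀ e ∈ ({e₁, e₂, e₃} : Finset E),
      (G.src e ∈ insert v U ∧ G.dst e ∈ insert v U) ∧ (G.src e = v ∨ G.dst e = v)) :
    G.iCount U + 3 ≤ G.iCount (insert v U) := by
  have hsub : (Finset.univ.filter fun e => G.src e ∈ U ∧ G.dst e ∈ U) ∪ {e₁, e₂, e₃}
      ⊆ Finset.univ.filter fun e => G.src e ∈ insert v U ∧ G.dst e ∈ insert v U := by
    intro e he
    rw [Finset.mem_union] at he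
    rcases he with he | he
    · rw [Finset.mem_filter] at he ⊢
      exact ⟨Finset.mem_univ _, Finset.mem_insert_of_mem he.2.1, Finset.mem_insert_of_mem he.2.2⟩
    · exact Finset.mem_filter.2 ⟨Finset.mem_univ _, (hin e he).1⟩
  have hdisj : Disjoint (Finset.univ.filter fun e => G.src e ∈ U ∧ G.dst e ∈ U)
      ({e₁, e₂, e₃} : Finset E) := by
    rw [Finset.disjoint_left]
    intro e he1 he2
    rw [Finset.mem_filter] at he1
    rcases (hin e he2).2 with h | h
    · exact hv (h ▸ he1.2.1)
    · exact hv (h ▸ he1.2.2)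
  have h3 : ({e₁, e₂, e₃} : Finset E).card = 3 := by
    rw [Finset.card_insert_of_notMem (by simp [h12, h13]),
      Finset.card_insert_of_notMem (by simp [h23]), Finset.card_singleton]
  have := Finset.card_le_card hsub
  rw [Finset.card_union_of_disjoint hdisj, h3] at this
  exact this

theorem not_mem_image_val {p : V → Prop} [DecidablePred p] (X' : Finset {w : V // p w})
    {a : V} (ha : ¬ p a) : a ∉ X'.image Subtype.val := by
  intro h
  obtain ⟨b, _, hb⟩ := Finset.mem_image.1 h
  exact ha (hb ▸ b.2)

theorem iCount_deleteVertex (v : V) (X' : Finset {w : V // w ≠ v}) :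
    (G.deleteVertex v).iCount X' = G.iCount (X'.image Subtype.val) := by
  classical
  unfold iCount
  have h1 : (Finset.univ.filter fun e : {e : E // G.src e ≠ v ∧ G.dst e ≠ v} =>
      (G.deleteVertex v).src e ∈ X' ∧ (G.deleteVertex v).dst e ∈ X')
      = Finset.univ.filter fun e => G.src e.1 ∈ X'.image Subtype.val
          ∧ G.dst e.1 ∈ X'.image Subtype.val := by
    ext e
    simp only [Finset.mem_filter, Finset.mem_univ, true_and]
    rw [mem_image_val (p := fun w => w ≠ v) e.2.1, mem_image_val (p := fun w => w ≠ v) e.2.2]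
    exact Iff.rfl
  rw [h1, filter_subtype_card (q := fun e => G.src e ∈ X'.image Subtype.val
    ∧ G.dst e ∈ X'.image Subtype.val)]
  refine congrArg Finset.card ?_
  ext e
  simp only [Finset.mem_filter, Finset.mem_univ, true_and]
  constructor
  · exact fun h => h.2
  · intro h
    refine ⟨⟨?_, ?_⟩, h⟩
    · intro hsrc
      exact not_mem_image_val X' (p := fun w => w ≠ v) (by simp) (hsrc ▸ h.1)
    · intro hdst
      exact not_mem_image_val X' (p := fun w => w ≠ v) (by simp) (hdst ▸ h.2)

theorem sparse_deleteVertex (v : V) (hs : G.Sparse 2 2) :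
    (G.deleteVertex v).Sparse 2 2 := by
  intro X' ⟨e', he₁, he₂⟩
  rw [G.iCount_deleteVertex v X']
  have hcard : (X'.image Subtype.val).card = X'.card :=
    Finset.card_image_of_injective X' Subtype.val_injective
  rw [← hcard]
  refine hs _ ⟨e'.1, ?_, ?_⟩
  · exact (mem_image_val (p := fun w => w ≠ v) e'.2.1).2 he₁
  · exact (mem_image_val (p := fun w => w ≠ v) e'.2.2).2 he₂

theorem card_vertex_compl (v : V) :
    Fintype.card {w : V // w ≠ v} = Fintype.card V - 1 := by
  rw [Fintype.card_subtype_compl, Fintype.card_subtype_eq]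

theorem card_edge_compl (v : V) :
    Fintype.card {e : E // G.src e ≠ v ∧ G.dst e ≠ v}
      = Fintype.card E - (G.inc v).card := by
  rw [Fintype.card_subtype]
  have heq : (Finset.univ.filter fun e => G.src e ≠ v ∧ G.dst e ≠ v)
      = Finset.univ \ G.inc v := by
    ext e
    simp [inc, not_or]
  rw [heq, Finset.card_sdiff_of_subset (Finset.subset_univ _), Finset.card_univ]

theorem conn_image_deleteVertex {v : V}
    {F' : Finset {e : E // G.src e ≠ v ∧ G.dst e ≠ v}}
    {a b : {w : V // w ≠ v}} (h : (G.deleteVertex v).conn ↑F' a b) :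
    G.conn ↑(F'.image Subtype.val) a.1 b.1 := by
  refine G.conn_lift (G.deleteVertex v) Subtype.val ?_ h
  intro x y ⟨e', he', hend⟩
  refine Relation.ReflTransGen.single ⟨e'.1, Finset.mem_coe.2
    (Finset.mem_image.2 ⟨e', Finset.mem_coe.1 he', rfl⟩), ?_⟩
  rcases hend with ⟨h1, h2⟩ | ⟨h1, h2⟩
  · exact Or.inl ⟨congrArg Subtype.val h1, congrArg Subtype.val h2⟩
  · exact Or.inr ⟨congrArg Subtype.val h1, congrArg Subtype.val h2⟩

/-- The endpoint of `e` other than `v`. -/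
def other (v : V) (e : E) : V := if G.src e = v then G.dst e else G.src e

theorem other_spec {v : V} {e : E} (hl : G.src e ≠ G.dst e) (he : e ∈ G.inc v) :
    ((G.src e = v ∧ G.dst e = G.other v e) ∨ (G.src e = G.other v e ∧ G.dst e = v))
      ∧ G.other v e ≠ v := by
  rw [inc, Finset.mem_filter] at he
  rw [other]
  rcases he.2 with h | h
  · rw [if_pos h]
    exact ⟨Or.inl ⟨h, rfl⟩, fun hc => hl (h.trans hc.symm)⟩
  · rw [if_neg (fun hc => hl (hc.trans h.symm))]
    exact ⟨Or.inr ⟨rfl, h⟩, fun hc => hl (hc.trans h.symm) |>.elim⟩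

theorem conn_via {v : V} {e : E} {T : Finset E} (hl : G.src e ≠ G.dst e)
    (he : e ∈ G.inc v) (heT : e ∈ T) : G.conn ↑T v (G.other v e) := by
  rcases (G.other_spec hl he).1 with ⟨h1, h2⟩ | ⟨h1, h2⟩
  · exact Relation.ReflTransGen.single ⟨e, heT, Or.inl ⟨h1, h2⟩⟩
  · exact Relation.ReflTransGen.single ⟨e, heT, Or.inr ⟨h1, h2⟩⟩

theorem conn_all_of {T : Finset E} {v p : V} (hp : p ≠ v) (hbridge : G.conn ↑T v p)
    (hlift : ∀ a b : {w : V // w ≠ v}, G.conn ↑T a.1 b.1) (u w : V) : G.conn ↑T u w := by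
  by_cases hu : u = v <;> by_cases hw : w = v
  · subst hu; subst hw; exact G.conn_refl _
  · subst hu; exact hbridge.trans (hlift ⟨p, hp⟩ ⟨w, hw⟩)
  · subst hw; exact (hlift ⟨u, hu⟩ ⟨p, hp⟩).trans (G.conn_symm hbridge)
  · exact hlift ⟨u, hu⟩ ⟨w, hw⟩

end Aux

/-- The Nash-Williams two-tree decomposition statement for `(2,2)`-tight multigraphs
on `n` vertices. -/
def NWStatement (n : ℕ) : Prop :=
  ∀ (V E : Type) [Fintype V] [Fintype E] [DecidableEq V] [DecidableEq E]
    (G : Multigraph V E), Fintype.card V = n → G.Sparse 2 2 →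
    (Fintype.card E : ℤ) = 2 * (n : ℤ) - 2 →
    ∃ T₁ T₂ : Finset E, Disjoint T₁ T₂ ∧ T₁ ∪ T₂ = Finset.univ ∧
      (∀ u w, G.conn ↑T₁ u w) ∧ T₁.card + 1 = n ∧
      (∀ u w, G.conn ↑T₂ u w) ∧ T₂.card + 1 = n

section Cases

set_option linter.unusedSectionVars false

variable {V E : Type} (G : Multigraph V E)
variable [Fintype V] [Fintype E] [DecidableEq V] [DecidableEq E]

theorem nw_deg2 {v : V} (hs : G.Sparse 2 2)
    (hE : (Fintype.card E : ℤ) = 2 * Fintype.card V - 2) (hn : 2 ≤ Fintype.card V)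
    (hdeg : (G.inc v).card = 2) (hprev : NWStatement (Fintype.card V - 1)) :
    ∃ T₁ T₂ : Finset E, Disjoint T₁ T₂ ∧ T₁ ∪ T₂ = Finset.univ ∧
      (∀ u w, G.conn ↑T₁ u w) ∧ T₁.card + 1 = Fintype.card V ∧
      (∀ u w, G.conn ↑T₂ u w) ∧ T₂.card + 1 = Fintype.card V := by
  classical
  have hl := G.no_loops hs
  obtain ⟨e₁, e₂, hne, hI⟩ := Finset.card_eq_two.1 hdeg
  have he₁I : e₁ ∈ G.inc v := by rw [hI]; simp
  have he₂I : e₂ ∈ G.inc v := by rw [hI]; simp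
  have hV' : Fintype.card {w : V // w ≠ v} = Fintype.card V - 1 := card_vertex_compl v
  have hEcard : Fintype.card E = 2 * Fintype.card V - 2 := by omega
  have hE' : (Fintype.card {e : E // G.src e ≠ v ∧ G.dst e ≠ v} : ℤ)
      = 2 * ((Fintype.card V - 1 : ℕ) : ℤ) - 2 := by
    rw [G.card_edge_compl v, hdeg]
    have h2 : 2 ≤ Fintype.card E := by omega
    push_cast [hEcard]
    omega
  obtain ⟨T₁', T₂', hdisj', huniv', hconn₁', hcard₁', hconn₂', hcard₂'⟩ :=
    hprev _ _ (G.deleteVertex v) hV' (G.sparse_deleteVertex v hs) hE'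
  set T₁ : Finset E := T₁'.image Subtype.val ∪ {e₁} with hT₁
  set T₂ : Finset E := T₂'.image Subtype.val ∪ {e₂} with hT₂
  have himg : ∀ (T' : Finset {e : E // G.src e ≠ v ∧ G.dst e ≠ v}) (e : E),
      e ∈ T'.image Subtype.val → G.src e ≠ v ∧ G.dst e ≠ v := by
    intro T' e he
    obtain ⟨b, _, hb⟩ := Finset.mem_image.1 he
    exact hb ▸ b.2
  have hincn : ∀ e ∈ G.inc v, ¬ (G.src e ≠ v ∧ G.dst e ≠ v) := by
    intro e he hc
    rw [inc, Finset.mem_filter] at he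
    rcases he.2 with h | h
    exacts [hc.1 h, hc.2 h]
  refine ⟨T₁, T₂, ?_, ?_, ?_, ?_, ?_, ?_⟩
  · rw [Finset.disjoint_left]
    intro x hx1 hx2
    rw [hT₁, Finset.mem_union, Finset.mem_singleton] at hx1
    rw [hT₂, Finset.mem_union, Finset.mem_singleton] at hx2
    rcases hx1 with hx1 | rfl <;> rcases hx2 with hx2 | hx2
    · obtain ⟨b, hb, hbx⟩ := Finset.mem_image.1 hx1
      obtain ⟨c, hc, hcx⟩ := Finset.mem_image.1 hx2
      have : b = c := Subtype.ext (hbx.trans hcx.symm)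
      exact Finset.disjoint_left.1 hdisj' hb (this ▸ hc)
    · exact hincn x (hx2 ▸ he₂I) (himg T₁' x hx1)
    · exact hincn x he₁I (himg T₂' x hx2)
    · exact hne hx2
  · rw [Finset.eq_univ_iff_forall]
    intro e
    by_cases hev : e ∈ G.inc v
    · rw [hI, Finset.mem_insert, Finset.mem_singleton] at hev
      rw [Finset.mem_union, hT₁, hT₂, Finset.mem_union, Finset.mem_union,
        Finset.mem_singleton, Finset.mem_singleton]
      tauto
    · rw [inc, Finset.mem_filter] at hev
      push_neg at hev
      have hcond : G.src e ≠ v ∧ G.dst e ≠ v := hev (Finset.mem_univ e)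
      have : (⟨e, hcond⟩ : {e : E // G.src e ≠ v ∧ G.dst e ≠ v}) ∈ T₁' ∪ T₂' := by
        rw [huniv']; exact Finset.mem_univ _
      rw [Finset.mem_union] at this
      rw [Finset.mem_union, hT₁, hT₂, Finset.mem_union, Finset.mem_union]
      rcases this with h | h
      · exact Or.inl (Or.inl (Finset.mem_image.2 ⟨_, h, rfl⟩))
      · exact Or.inr (Or.inl (Finset.mem_image.2 ⟨_, h, rfl⟩))
  · refine G.conn_all_of (G.other_spec (hl e₁) he₁I).2
      (G.conn_via (hl e₁) he₁I (by rw [hT₁]; simp)) ?_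
    intro a b
    refine G.conn_mono ?_ (G.conn_image_deleteVertex (hconn₁' a b))
    rw [hT₁]
    exact_mod_cast Finset.coe_subset.2 Finset.subset_union_left
  · have hnotmem : e₁ ∉ T₁'.image Subtype.val := by
      intro h
      exact hincn e₁ he₁I (himg T₁' e₁ h)
    rw [hT₁, Finset.card_union_of_disjoint (Finset.disjoint_singleton_right.2 hnotmem),
      Finset.card_singleton, Finset.card_image_of_injective _ Subtype.val_injective]
    omega
  · refine G.conn_all_of (G.other_spec (hl e₂) he₂I).2
      (G.conn_via (hl e₂) he₂I (by rw [hT₂]; simp)) ?_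
    intro a b
    refine G.conn_mono ?_ (G.conn_image_deleteVertex (hconn₂' a b))
    rw [hT₂]
    exact_mod_cast Finset.coe_subset.2 Finset.subset_union_left
  · have hnotmem : e₂ ∉ T₂'.image Subtype.val := by
      intro h
      exact hincn e₂ he₂I (himg T₂' e₂ h)
    rw [hT₂, Finset.card_union_of_disjoint (Finset.disjoint_singleton_right.2 hnotmem),
      Finset.card_singleton, Finset.card_image_of_injective _ Subtype.val_injective]
    omega

theorem find_pair {v : V} (hs : G.Sparse 2 2) {e₁ e₂ e₃ : E}
    (hl : ∀ e : E, G.src e ≠ G.dst e)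
    (h12 : e₁ ≠ e₂) (h13 : e₁ ≠ e₃) (h23 : e₂ ≠ e₃)
    (hI : G.inc v = {e₁, e₂, e₃}) :
    ∃ fp fq fr : E, ({fp, fq, fr} : Finset E) = {e₁, e₂, e₃} ∧
      fp ≠ fq ∧ fp ≠ fr ∧ fq ≠ fr ∧ G.other v fp ≠ G.other v fq ∧
      ∀ Y : Finset V, v ∉ Y → G.other v fp ∈ Y → G.other v fq ∈ Y →
        (G.iCount Y : ℤ) < 2 * Y.card - 2 := by
  classical
  have hmem : ∀ e ∈ ({e₁, e₂, e₃} : Finset E), e ∈ G.inc v := fun e he => hI ▸ he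
  have hov : ∀ e ∈ ({e₁, e₂, e₃} : Finset E), G.other v e ≠ v :=
    fun e he => (G.other_spec (hl e) (hmem e he)).2
  by_contra hcon
  push_neg at hcon
  have key : ∀ (fp fq fr : E), ({fp, fq, fr} : Finset E) = {e₁, e₂, e₃} →
      fp ≠ fq → fp ≠ fr → fq ≠ fr →
      ∃ Y : Finset V, (v ∉ Y ∧ Y.Nonempty ∧ 2 * (Y.card : ℤ) - 2 ≤ G.iCount Y) ∧
        G.other v fp ∈ Y ∧ G.other v fq ∈ Y := by
    intro fp fq fr hset hpq hpr hqr
    have hfp : fp ∈ ({e₁, e₂, e₃} : Finset E) := by rw [← hset]; simp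
    have hfq : fq ∈ ({e₁, e₂, e₃} : Finset E) := by rw [← hset]; simp
    by_cases hd : G.other v fp = G.other v fq
    · refine ⟨{G.other v fp}, ⟨?_, ⟨_, Finset.mem_singleton_self _⟩, ?_⟩, ?_, ?_⟩
      · rw [Finset.mem_singleton]
        exact fun h => hov fp hfp h.symm
      · simp
      · exact Finset.mem_singleton_self _
      · rw [hd]; exact Finset.mem_singleton_self _
    · obtain ⟨Y, hY1, hY2, hY3, hY4⟩ := hcon fp fq fr hset hpq hpr hqr hd
      exact ⟨Y, ⟨hY1, ⟨_, hY2⟩, hY4⟩, hY2, hY3⟩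
  obtain ⟨Y₁, hY₁, h11, h12'⟩ := key e₁ e₂ e₃ rfl h12 h13 h23
  obtain ⟨Y₂, hY₂, h22, h23'⟩ := key e₂ e₃ e₁ (by ext x; simp; tauto) h23
    (fun h => h12 h.symm) (fun h => h13 h.symm)
  obtain ⟨Y₃, hY₃, h31, h33'⟩ := key e₁ e₃ e₂ (by ext x; simp; tauto) h13 h12 (fun h => h23 h.symm)
  have hU₁ := G.good_union hs hY₁ hY₂ ⟨G.other v e₂, Finset.mem_inter.2 ⟨h12', h22⟩⟩
  have hU₂ := G.good_union hs hU₁ hY₃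
    ⟨G.other v e₁, Finset.mem_inter.2 ⟨Finset.mem_union_left _ h11, h31⟩⟩
  set U := Y₁ ∪ Y₂ ∪ Y₃ with hU
  have ho₁U : G.other v e₁ ∈ U := Finset.mem_union_left _ (Finset.mem_union_left _ h11)
  have ho₂U : G.other v e₂ ∈ U := Finset.mem_union_left _ (Finset.mem_union_left _ h12')
  have ho₃U : G.other v e₃ ∈ U := Finset.mem_union_right _ h33'
  have hin : ∀ e ∈ ({e₁, e₂, e₃} : Finset E),
      (G.src e ∈ insert v U ∧ G.dst e ∈ insert v U) ∧ (G.src e = v ∨ G.dst e = v) := by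
    intro e he
    have hoU : G.other v e ∈ U := by
      rcases Finset.mem_insert.1 he with rfl | he'
      · exact ho₁U
      rcases Finset.mem_insert.1 he' with rfl | he''
      · exact ho₂U
      · rw [Finset.mem_singleton] at he''
        exact he'' ▸ ho₃U
    have hincv := hmem e he
    rcases (G.other_spec (hl e) hincv).1 with ⟨ha, hb⟩ | ⟨ha, hb⟩
    · exact ⟨⟨ha ▸ Finset.mem_insert_self v U, hb ▸ Finset.mem_insert_of_mem hoU⟩, Or.inl ha⟩
    · exact ⟨⟨ha ▸ Finset.mem_insert_of_mem hoU, hb ▸ Finset.mem_insert_self v U⟩, Or.inr hb⟩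
  have h3 := G.iCount_insert_three hU₂.1 h12 h13 h23 hin
  have hsp := hs (insert v U) ⟨e₁, (hin e₁ (by simp)).1⟩
  rw [Finset.card_insert_of_notMem hU₂.1] at hsp
  have hic := hU₂.2.2
  have h3' : (G.iCount U : ℤ) + 3 ≤ G.iCount (insert v U) := by exact_mod_cast h3
  push_cast at hsp
  linarith

theorem nw_deg3 {v : V} (hs : G.Sparse 2 2)
    (hE : (Fintype.card E : ℤ) = 2 * Fintype.card V - 2) (hn : 2 ≤ Fintype.card V)
    (hdeg : (G.inc v).card = 3) (hprev : NWStatement (Fintype.card V - 1)) :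
    ∃ T₁ T₂ : Finset E, Disjoint T₁ T₂ ∧ T₁ ∪ T₂ = Finset.univ ∧
      (∀ u w, G.conn ↑T₁ u w) ∧ T₁.card + 1 = Fintype.card V ∧
      (∀ u w, G.conn ↑T₂ u w) ∧ T₂.card + 1 = Fintype.card V := by
  classical
  have hl := G.no_loops hs
  obtain ⟨e₁, e₂, e₃, h12, h13, h23, hI⟩ := Finset.card_eq_three.1 hdeg
  obtain ⟨fp, fq, fr, hset, hpq, hpr, hqr, hne, hnogood⟩ :=
    G.find_pair hs hl h12 h13 h23 hI
  have hmem : ∀ e ∈ ({fp, fq, fr} : Finset E), e ∈ G.inc v := by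
    intro e he
    rw [hI, ← hset]
    exact he
  have hfpI : fp ∈ G.inc v := hmem fp (by simp)
  have hfqI : fq ∈ G.inc v := hmem fq (by simp)
  have hfrI : fr ∈ G.inc v := hmem fr (by simp)
  set p := G.other v fp with hp_def
  set q := G.other v fq with hq_def
  set r := G.other v fr with hr_def
  have hp : p ≠ v := (G.other_spec (hl fp) hfpI).2
  have hq : q ≠ v := (G.other_spec (hl fq) hfqI).2
  have hr : r ≠ v := (G.other_spec (hl fr) hfrI).2
  set G'' := (G.deleteVertex v).addEdge ⟨p, hp⟩ ⟨q, hq⟩ with hG''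
  have hV' : Fintype.card {w : V // w ≠ v} = Fintype.card V - 1 := card_vertex_compl v
  have hEcard : Fintype.card E = 2 * Fintype.card V - 2 := by omega
  have hE3 : 3 ≤ Fintype.card E := by
    rw [← hdeg]
    exact Finset.card_le_card (Finset.subset_univ _) |>.trans_eq (Finset.card_univ)
  have hE'' : (Fintype.card ({e : E // G.src e ≠ v ∧ G.dst e ≠ v} ⊕ Unit) : ℤ)
      = 2 * ((Fintype.card V - 1 : ℕ) : ℤ) - 2 := by
    rw [Fintype.card_sum, G.card_edge_compl v, hdeg]
    simp only [Fintype.card_unit]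
    push_cast [hEcard]
    omega
  -- sparsity of the modified graph
  have hs'' : G''.Sparse 2 2 := by
    intro X' ⟨e'', he₁'', he₂''⟩
    set X := X'.image Subtype.val with hX
    have hvX : v ∉ X := not_mem_image_val X' (p := fun w => w ≠ v) (by simp)
    have hXcard : X.card = X'.card := Finset.card_image_of_injective _ Subtype.val_injective
    have hicount : G''.iCount X'
        = (G.deleteVertex v).iCount X'
          + (if (⟨p, hp⟩ ∈ X' ∧ ⟨q, hq⟩ ∈ X') then 1 else 0) := by
      rw [iCount, filter_sum_card]
      rfl
    rw [hicount, G.iCount_deleteVertex v X']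
    by_cases hpq' : (⟨p, hp⟩ ∈ X' ∧ (⟨q, hq⟩ : {w : V // w ≠ v}) ∈ X')
    · rw [if_pos hpq']
      have hpX : p ∈ X := Finset.mem_image.2 ⟨_, hpq'.1, rfl⟩
      have hqX : q ∈ X := Finset.mem_image.2 ⟨_, hpq'.2, rfl⟩
      have hlt := hnogood X hvX hpX hqX
      have hXX : X'.image Subtype.val = X := rfl
      rw [hXX]
      rw [hXcard] at hlt
      push_cast at hlt ⊢
      omega
    · rw [if_neg hpq']
      have hspan : ∃ e : E, G.src e ∈ X ∧ G.dst e ∈ X := by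
        rcases e'' with e | u
        · exact ⟨e.1, (mem_image_val (p := fun w => w ≠ v) e.2.1).2 he₁'',
            (mem_image_val (p := fun w => w ≠ v) e.2.2).2 he₂''⟩
        · exact absurd ⟨he₁'', he₂''⟩ hpq'
      have hsp2 := hs X hspan
      have hXX : X'.image Subtype.val = X := rfl
      rw [hXX]
      rw [hXcard] at hsp2
      push_cast at hsp2 ⊢
      omega
  obtain ⟨A, B, hdisj'', huniv'', hconnA, hcardA, hconnB, hcardB⟩ :=
    hprev _ _ G'' hV' hs'' hE''
  have hswap : ∀ (A B : Finset ({e : E // G.src e ≠ v ∧ G.dst e ≠ v} ⊕ Unit)),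
      Disjoint A B → A ∪ B = Finset.univ →
      (∀ u w, G''.conn ↑A u w) → A.card + 1 = Fintype.card V - 1 →
      (∀ u w, G''.conn ↑B u w) → B.card + 1 = Fintype.card V - 1 →
      Sum.inr () ∈ A →
      ∃ T₁ T₂ : Finset E, Disjoint T₁ T₂ ∧ T₁ ∪ T₂ = Finset.univ ∧
        (∀ u w, G.conn ↑T₁ u w) ∧ T₁.card + 1 = Fintype.card V ∧
        (∀ u w, G.conn ↑T₂ u w) ∧ T₂.card + 1 = Fintype.card V := by
    clear hdisj'' huniv'' hconnA hcardA hconnB hcardB A B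
    intro A B hdisj'' huniv'' hconnA hcardA hconnB hcardB hinrA
    set m : {e : E // G.src e ≠ v ∧ G.dst e ≠ v} ⊕ Unit → E :=
      Sum.elim Subtype.val (fun _ => fp) with hm
    have hincn : ∀ e ∈ G.inc v, ¬ (G.src e ≠ v ∧ G.dst e ≠ v) := by
      intro e he hc
      rw [inc, Finset.mem_filter] at he
      rcases he.2 with h | h
      exacts [hc.1 h, hc.2 h]
    have hminj : Function.Injective m := by
      intro x y hxy
      match x, y with
      | Sum.inl a, Sum.inl b => exact congrArg Sum.inl (Subtype.ext hxy)
      | Sum.inl a, Sum.inr u =>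
        have h' : (a : E) = fp := hxy
        exact absurd (h' ▸ a.2) (hincn fp hfpI)
      | Sum.inr u, Sum.inl b =>
        have h' : (b : E) = fp := hxy.symm
        exact absurd (h' ▸ b.2) (hincn fp hfpI)
      | Sum.inr u, Sum.inr u' => rfl
    have himgm : ∀ (S : Finset ({e : E // G.src e ≠ v ∧ G.dst e ≠ v} ⊕ Unit)) (x : E),
        x ∈ S.image m → (G.src x ≠ v ∧ G.dst x ≠ v) ∨ x = fp := by
      intro S x hx
      obtain ⟨z, _, hz⟩ := Finset.mem_image.1 hx
      match z with
      | Sum.inl a => exact Or.inl (hz ▸ a.2)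
      | Sum.inr u => exact Or.inr hz.symm
    set T₁ : Finset E := A.image m ∪ {fq} with hT₁
    set T₂ : Finset E := B.image m ∪ {fr} with hT₂
    have hfpT₁ : fp ∈ T₁ := by
      rw [hT₁, Finset.mem_union]
      exact Or.inl (Finset.mem_image.2 ⟨Sum.inr (), hinrA, rfl⟩)
    have hfqT₁ : fq ∈ T₁ := by rw [hT₁]; simp
    have hfrT₂ : fr ∈ T₂ := by rw [hT₂]; simp
    have hinrB : Sum.inr () ∉ B := Finset.disjoint_left.1 hdisj'' hinrA
    have hfqA : fq ∉ A.image m := by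
      intro h
      rcases himgm A fq h with h' | h'
      exacts [hincn fq hfqI h', hpq h'.symm]
    have hfrB : fr ∉ B.image m := by
      intro h
      rcases himgm B fr h with h' | h'
      exacts [hincn fr hfrI h', hpr h'.symm]
    have hconnvp : G.conn ↑T₁ v p := G.conn_via (hl fp) hfpI hfpT₁
    have hconnvq : G.conn ↑T₁ v q := G.conn_via (hl fq) hfqI hfqT₁
    refine ⟨T₁, T₂, ?_, ?_, ?_, ?_, ?_, ?_⟩
    · rw [Finset.disjoint_left]
      intro x hx1 hx2
      rw [hT₁, Finset.mem_union, Finset.mem_singleton] at hx1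
      rw [hT₂, Finset.mem_union, Finset.mem_singleton] at hx2
      rcases hx1 with hx1 | hx1 <;> rcases hx2 with hx2 | hx2
      · obtain ⟨z, hz, hzx⟩ := Finset.mem_image.1 hx1
        obtain ⟨z', hz', hzx'⟩ := Finset.mem_image.1 hx2
        have : z = z' := hminj (hzx.trans hzx'.symm)
        exact Finset.disjoint_left.1 hdisj'' hz (this ▸ hz')
      · rcases himgm A x hx1 with h' | h'
        · exact hincn x (by rw [hx2]; exact hfrI) h'
        · exact hpr (hx2.symm.trans h').symm
      · rcases himgm B x hx2 with h' | h'
        · exact hincn x (by rw [hx1]; exact hfqI) h'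
        · exact hpq (hx1.symm.trans h').symm
      · exact hqr (hx1.symm.trans hx2)
    · rw [Finset.eq_univ_iff_forall]
      intro e
      by_cases hev : e ∈ G.inc v
      · have : e ∈ ({fp, fq, fr} : Finset E) := by rw [hset, ← hI]; exact hev
        rw [Finset.mem_insert, Finset.mem_insert, Finset.mem_singleton] at this
        rw [Finset.mem_union]
        rcases this with rfl | rfl | rfl
        exacts [Or.inl hfpT₁, Or.inl hfqT₁, Or.inr hfrT₂]
      · rw [inc, Finset.mem_filter] at hev
        push_neg at hev
        have hcond : G.src e ≠ v ∧ G.dst e ≠ v := hev (Finset.mem_univ e)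
        have : (Sum.inl ⟨e, hcond⟩ : {e : E // G.src e ≠ v ∧ G.dst e ≠ v} ⊕ Unit)
            ∈ A ∪ B := by rw [huniv'']; exact Finset.mem_univ _
        rw [Finset.mem_union] at this
        rw [Finset.mem_union, hT₁, hT₂, Finset.mem_union, Finset.mem_union]
        rcases this with h | h
        · exact Or.inl (Or.inl (Finset.mem_image.2 ⟨_, h, rfl⟩))
        · exact Or.inr (Or.inl (Finset.mem_image.2 ⟨_, h, rfl⟩))
    · -- connectivity of T₁
      refine G.conn_all_of hp hconnvp ?_
      intro a b
      refine G.conn_lift G'' Subtype.val ?_ (hconnA a b)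
      intro x y ⟨e'', he'', hend⟩
      cases e'' with
      | inl e =>
        refine Relation.ReflTransGen.single ⟨e.1, ?_, ?_⟩
        · rw [hT₁]
          exact Finset.mem_coe.2 (Finset.mem_union_left _
            (Finset.mem_image.2 ⟨Sum.inl e, Finset.mem_coe.1 he'', rfl⟩))
        · rcases hend with ⟨ha, hb⟩ | ⟨ha, hb⟩
          · exact Or.inl ⟨congrArg Subtype.val ha, congrArg Subtype.val hb⟩
          · exact Or.inr ⟨congrArg Subtype.val ha, congrArg Subtype.val hb⟩
      | inr u =>
        have hpath : G.conn ↑T₁ p q := (G.conn_symm hconnvp).trans hconnvq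
        rcases hend with ⟨ha, hb⟩ | ⟨ha, hb⟩
        · have hxa : x.1 = p := congrArg Subtype.val ha.symm
          have hyb : y.1 = q := congrArg Subtype.val hb.symm
          rw [hxa, hyb]
          exact hpath
        · have hxa : x.1 = q := congrArg Subtype.val hb.symm
          have hyb : y.1 = p := congrArg Subtype.val ha.symm
          rw [hxa, hyb]
          exact G.conn_symm hpath
    · rw [hT₁, Finset.card_union_of_disjoint (Finset.disjoint_singleton_right.2 hfqA),
        Finset.card_singleton, Finset.card_image_of_injective _ hminj]
      omega
    · -- connectivity of T₂
      refine G.conn_all_of hr (G.conn_via (hl fr) hfrI hfrT₂) ?_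
      intro a b
      refine G.conn_lift G'' Subtype.val ?_ (hconnB a b)
      intro x y ⟨e'', he'', hend⟩
      cases e'' with
      | inl e =>
        refine Relation.ReflTransGen.single ⟨e.1, ?_, ?_⟩
        · rw [hT₂]
          exact Finset.mem_coe.2 (Finset.mem_union_left _
            (Finset.mem_image.2 ⟨Sum.inl e, Finset.mem_coe.1 he'', rfl⟩))
        · rcases hend with ⟨ha, hb⟩ | ⟨ha, hb⟩
          · exact Or.inl ⟨congrArg Subtype.val ha, congrArg Subtype.val hb⟩
          · exact Or.inr ⟨congrArg Subtype.val ha, congrArg Subtype.val hb⟩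
      | inr u => exact absurd (Finset.mem_coe.1 he'') hinrB
    · rw [hT₂, Finset.card_union_of_disjoint (Finset.disjoint_singleton_right.2 hfrB),
        Finset.card_singleton, Finset.card_image_of_injective _ hminj]
      omega
  have hinr : Sum.inr () ∈ A ∪ B := by rw [huniv'']; exact Finset.mem_univ _
  rw [Finset.mem_union] at hinr
  rcases hinr with h | h
  · exact hswap A B hdisj'' huniv'' hconnA hcardA hconnB hcardB h
  · obtain ⟨T₁, T₂, c1, c2, c3, c4, c5, c6⟩ :=
      hswap B A hdisj''.symm (by rw [Finset.union_comm]; exact huniv'')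
        hconnB hcardB hconnA hcardA h
    exact ⟨T₂, T₁, c1.symm, by rw [Finset.union_comm]; exact c2, c5, c6, c3, c4⟩

end Cases

namespace InnerAux

theorem nw : ∀ n : ℕ, NWStatement n := by
  intro n
  induction n using Nat.strong_induction_on with
  | _ n ih =>
    intro V E _ _ _ _ G hV hs hE
    subst hV
    rcases le_or_gt 2 (Fintype.card V) with hn | hn
    · have hne : Nonempty V := Fintype.card_pos_iff.mp (by omega)
      obtain ⟨v, hv3⟩ := G.exists_small_degree hE
      have hv2 := G.two_le_degree hs hE hn v
      have hinc := G.inc_card (G.no_loops hs) v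
      have hprev : NWStatement (Fintype.card V - 1) := ih _ (by omega)
      have hcases : (G.inc v).card = 2 ∨ (G.inc v).card = 3 := by omega
      rcases hcases with h2 | h3
      · exact G.nw_deg2 hs hE hn h2 hprev
      · exact G.nw_deg3 hs hE hn h3 hprev
    · have hVE : Fintype.card V = 1 ∧ Fintype.card E = 0 := by
        constructor <;> omega
      have hEempty : IsEmpty E := Fintype.card_eq_zero_iff.1 hVE.2
      have hconn : ∀ u w : V, G.conn (↑(∅ : Finset E)) u w := by
        intro u w
        have : u = w := Fintype.card_le_one_iff.1 (le_of_eq hVE.1) u w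
        exact this ▸ G.conn_refl u
      refine ⟨∅, ∅, Finset.disjoint_empty_left ∅, ?_, hconn, ?_, hconn, ?_⟩
      · simp [Finset.univ_eq_empty]
      · rw [Finset.card_empty]; omega
      · rw [Finset.card_empty]; omega

end InnerAux

end Multigraph

/-- A multigraph `G = (V,E)` is a `P(2,1)`-graph iff `E` is the
edge-disjoint union of the edge set of a spanning tree of `G` and the edge set of a
spanning connected map-graph of `G`. -/
theorem statement_2 {V E : Type} [Fintype V] [Fintype E] [DecidableEq V] [DecidableEq E]
    (G : Multigraph V E) :
    G.IsP21 ↔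
      ∃ T M : Finset E, Disjoint T M ∧ T ∪ M = Finset.univ ∧
        G.IsSpanningTree T ∧ G.IsConnectedSpanningMapGraph M := by
  classical
  constructor
  · rintro ⟨⟨hsp21, hcard21⟩, e₀, hsp22, hcard22⟩
    obtain ⟨T₁', T₂', hdisj, huniv, hc1, hn1, hc2, hn2⟩ :=
      Multigraph.InnerAux.nw (Fintype.card V) V {e : E // e ≠ e₀} (G.deleteEdge e₀) rfl
        hsp22 (by exact_mod_cast hcard22)
    have hlift : ∀ (S : Finset {e : E // e ≠ e₀}) (u w : V),
        (G.deleteEdge e₀).conn ↑S u w → G.conn ↑(S.image Subtype.val) u w := by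
      intro S u w h
      refine G.conn_lift (G.deleteEdge e₀) id ?_ h
      intro x y ⟨e', he', hend⟩
      exact Relation.ReflTransGen.single
        ⟨e'.1, Finset.mem_coe.2 (Finset.mem_image.2 ⟨e', Finset.mem_coe.1 he', rfl⟩), hend⟩
    have hnotmem : ∀ S : Finset {e : E // e ≠ e₀}, e₀ ∉ S.image Subtype.val := by
      intro S h
      obtain ⟨b, _, hb⟩ := Finset.mem_image.1 h
      exact b.2 hb
    refine ⟨T₁'.image Subtype.val, T₂'.image Subtype.val ∪ {e₀}, ?_, ?_, ⟨?_, ?_⟩, ?_, ?_⟩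
    · rw [Finset.disjoint_left]
      intro x hx1 hx2
      rw [Finset.mem_union, Finset.mem_singleton] at hx2
      rcases hx2 with hx2 | rfl
      · obtain ⟨z, hz, hzx⟩ := Finset.mem_image.1 hx1
        obtain ⟨z', hz', hzx'⟩ := Finset.mem_image.1 hx2
        have : z = z' := Subtype.ext (hzx.trans hzx'.symm)
        exact Finset.disjoint_left.1 hdisj hz (this ▸ hz')
      · exact hnotmem T₁' hx1
    · rw [Finset.eq_univ_iff_forall]
      intro e
      by_cases he : e = e₀
      · rw [Finset.mem_union, Finset.mem_union, Finset.mem_singleton]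
        exact Or.inr (Or.inr he)
      · have : (⟨e, he⟩ : {e : E // e ≠ e₀}) ∈ T₁' ∪ T₂' := by
          rw [huniv]; exact Finset.mem_univ _
        rw [Finset.mem_union] at this
        rw [Finset.mem_union, Finset.mem_union]
        rcases this with h | h
        · exact Or.inl (Finset.mem_image.2 ⟨_, h, rfl⟩)
        · exact Or.inr (Or.inl (Finset.mem_image.2 ⟨_, h, rfl⟩))
    · exact fun u w => hlift T₁' u w (hc1 u w)
    · rw [Finset.card_image_of_injective _ Subtype.val_injective]
      exact hn1
    · intro u w
      refine G.conn_mono ?_ (hlift T₂' u w (hc2 u w))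
      exact_mod_cast Finset.coe_subset.2 Finset.subset_union_left
    · rw [Finset.card_union_of_disjoint
          (Finset.disjoint_singleton_right.2 (hnotmem T₂')), Finset.card_singleton,
        Finset.card_image_of_injective _ Subtype.val_injective]
      omega
  · rintro ⟨T, M, hdisj, huniv, ⟨hTconn, hTcard⟩, hMconn, hMcard⟩
    have hne : Nonempty V := Fintype.card_pos_iff.mp (by omega)
    obtain ⟨M₀, hM₀sub, hM₀conn, hM₀card⟩ := G.exists_tree_subset hMconn
    have hM₀ne : M₀ ≠ M := by
      intro h
      rw [h] at hM₀card
      omega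
    obtain ⟨e₀, he₀M, he₀M₀⟩ := Finset.exists_of_ssubset (Finset.ssubset_iff_subset_ne.2 ⟨hM₀sub, hM₀ne⟩)
    have hMeq : insert e₀ M₀ = M := by
      refine Finset.eq_of_subset_of_card_le ?_ ?_
      · intro x hx
        rcases Finset.mem_insert.1 hx with rfl | hx
        exacts [he₀M, hM₀sub hx]
      · rw [Finset.card_insert_of_notMem he₀M₀]
        omega
    have hcardE : Fintype.card E = T.card + M.card := by
      rw [← Finset.card_univ, ← huniv, Finset.card_union_of_disjoint hdisj]
    -- the subgraph-counting decomposition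
    have hsplit : ∀ X : Finset V,
        G.iCount X = (T.filter fun e => G.src e ∈ X ∧ G.dst e ∈ X).card
          + (M.filter fun e => G.src e ∈ X ∧ G.dst e ∈ X).card := by
      intro X
      rw [Multigraph.iCount, ← huniv, Finset.filter_union]
      exact Finset.card_union_of_disjoint (Finset.disjoint_filter_filter hdisj)
    have hMbound : ∀ X : Finset V, X.Nonempty →
        (M.filter fun e => G.src e ∈ X ∧ G.dst e ∈ X).card ≤ X.card := by
      intro X hX
      have h1 := G.tree_inside_bound hM₀conn hM₀card hX
      have h2 : (M.filter fun e => G.src e ∈ X ∧ G.dst e ∈ X)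
          ⊆ insert e₀ (M₀.filter fun e => G.src e ∈ X ∧ G.dst e ∈ X) := by
        intro x hx
        rw [Finset.mem_filter] at hx
        rw [← hMeq] at hx
        rcases Finset.mem_insert.1 hx.1 with rfl | hx1
        · exact Finset.mem_insert_self _ _
        · exact Finset.mem_insert_of_mem (Finset.mem_filter.2 ⟨hx1, hx.2⟩)
      have h3 := Finset.card_le_card h2
      have h4 := Finset.card_insert_le e₀ (M₀.filter fun e => G.src e ∈ X ∧ G.dst e ∈ X)
      omega
    have hTbound : ∀ X : Finset V, X.Nonempty →
        (T.filter fun e => G.src e ∈ X ∧ G.dst e ∈ X).card + 1 ≤ X.card :=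
      fun X hX => G.tree_inside_bound hTconn hTcard hX
    refine ⟨⟨?_, ?_⟩, e₀, ?_, ?_⟩
    · intro X ⟨e, he1, he2⟩
      have hX : X.Nonempty := ⟨G.src e, he1⟩
      have h1 := hTbound X hX
      have h2 := hMbound X hX
      have h3 := hsplit X
      omega
    · omega
    · intro X hspan
      obtain ⟨e', he1, he2⟩ := hspan
      have hX : X.Nonempty := ⟨G.src e'.1, he1⟩
      have hicount : (G.deleteEdge e₀).iCount X
          = (Finset.univ.filter fun e : E => e ≠ e₀ ∧ (G.src e ∈ X ∧ G.dst e ∈ X)).card := by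
        rw [Multigraph.iCount]
        exact Multigraph.filter_subtype_card (p := fun e => e ≠ e₀)
          (q := fun e => G.src e ∈ X ∧ G.dst e ∈ X)
      have hsub : (Finset.univ.filter fun e : E => e ≠ e₀ ∧ (G.src e ∈ X ∧ G.dst e ∈ X))
          ⊆ (T.filter fun e => G.src e ∈ X ∧ G.dst e ∈ X)
            ∪ (M₀.filter fun e => G.src e ∈ X ∧ G.dst e ∈ X) := by
        intro x hx
        rw [Finset.mem_filter] at hx
        have hxTM : x ∈ T ∪ M := by rw [huniv]; exact Finset.mem_univ _
        rw [Finset.mem_union] at hxTM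
        rw [Finset.mem_union, Finset.mem_filter, Finset.mem_filter]
        rcases hxTM with h | h
        · exact Or.inl ⟨h, hx.2.2⟩
        · refine Or.inr ⟨?_, hx.2.2⟩
          rw [← hMeq] at h
          rcases Finset.mem_insert.1 h with rfl | h'
          · exact absurd rfl hx.2.1
          · exact h'
      have hcard := (Finset.card_le_card hsub).trans (Finset.card_union_le _ _)
      have h1 := hTbound X hX
      have h2 := G.tree_inside_bound hM₀conn hM₀card hX
      rw [hicount]
      omega
    · have hcard' : Fintype.card {e : E // e ≠ e₀} = Fintype.card E - 1 := by
        rw [Fintype.card_subtype_compl, Fintype.card_subtype_eq]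
      rw [hcard']
      omega
end

section
/- Let G = (V,E) be a P(2,1)-graph. Then among the over-critical subsets of V there is a unique one of minimum cardinality, say X, and the induced subgraph G[X] is a (2,2)-circuit. -/
private lemma filter_subtype_card' {α : Type} [Fintype α] (Q : α → Prop) [DecidablePred Q]
    (P : α → Prop) [DecidablePred P] :
    (Finset.univ.filter fun e : {x : α // Q x} => P e.1).card
      = (Finset.univ.filter fun e : α => Q e ∧ P e).card := by
  apply Finset.card_bij (fun a _ => a.1)
  · intro a ha
    simp only [Finset.mem_filter, Finset.mem_univ, true_and] at ha ⊢
    exact ⟨a.2, ha⟩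
  · intro a _ b _ h
    exact Subtype.ext h
  · intro b hb
    simp only [Finset.mem_filter, Finset.mem_univ, true_and] at hb
    exact ⟨⟨b, hb.1⟩, by simpa using hb.2, rfl⟩

private lemma iCount_deleteEdge_not {V E : Type} [Fintype E] [DecidableEq V] [DecidableEq E]
    (G : Multigraph V E) (e₀ : E) (Z : Finset V)
    (h : ¬ (G.src e₀ ∈ Z ∧ G.dst e₀ ∈ Z)) :
    (G.deleteEdge e₀).iCount Z = G.iCount Z := by
  show (Finset.univ.filter fun e : {e : E // e ≠ e₀} => G.src e.1 ∈ Z ∧ G.dst e.1 ∈ Z).card = _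
  rw [filter_subtype_card' (fun e => e ≠ e₀) (fun e => G.src e ∈ Z ∧ G.dst e ∈ Z)]
  congr 1
  ext e
  simp only [Finset.mem_filter, Finset.mem_univ, true_and]
  constructor
  · exact fun h' => h'.2
  · intro h'; exact ⟨fun he => h (he ▸ h'), h'⟩

private lemma iCount_deleteEdge_mem {V E : Type} [Fintype E] [DecidableEq V] [DecidableEq E]
    (G : Multigraph V E) (e₀ : E) (Z : Finset V)
    (h : G.src e₀ ∈ Z ∧ G.dst e₀ ∈ Z) :
    (G.deleteEdge e₀).iCount Z + 1 = G.iCount Z := by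
  show (Finset.univ.filter fun e : {e : E // e ≠ e₀} => G.src e.1 ∈ Z ∧ G.dst e.1 ∈ Z).card + 1 = _
  rw [filter_subtype_card' (fun e => e ≠ e₀) (fun e => G.src e ∈ Z ∧ G.dst e ∈ Z)]
  have heq : (Finset.univ.filter fun e : E => e ≠ e₀ ∧ (G.src e ∈ Z ∧ G.dst e ∈ Z))
      = (Finset.univ.filter fun e : E => G.src e ∈ Z ∧ G.dst e ∈ Z).erase e₀ := by
    ext e; simp only [Finset.mem_filter, Finset.mem_univ, true_and, Finset.mem_erase]
  rw [heq]
  exact Finset.card_erase_add_one (Finset.mem_filter.2 ⟨Finset.mem_univ _, h⟩)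

private lemma iCount_submodular {V E : Type} [Fintype E] [DecidableEq V] [DecidableEq E]
    (G : Multigraph V E) (X Y : Finset V) :
    G.iCount X + G.iCount Y ≤ G.iCount (X ∩ Y) + G.iCount (X ∪ Y) := by
  unfold Multigraph.iCount
  set A := Finset.univ.filter fun e => G.src e ∈ X ∧ G.dst e ∈ X with hA
  set B := Finset.univ.filter fun e => G.src e ∈ Y ∧ G.dst e ∈ Y with hB
  have h1 : Finset.univ.filter (fun e => G.src e ∈ X ∩ Y ∧ G.dst e ∈ X ∩ Y) = A ∩ B := by
    ext e; simp only [hA, hB, Finset.mem_filter, Finset.mem_univ, true_and,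
      Finset.mem_inter]; tauto
  have h2 : A ∪ B ⊆ Finset.univ.filter (fun e => G.src e ∈ X ∪ Y ∧ G.dst e ∈ X ∪ Y) := by
    intro e he
    simp only [hA, hB, Finset.mem_filter, Finset.mem_univ, true_and, Finset.mem_union] at he ⊢
    tauto
  rw [h1]
  calc A.card + B.card = (A ∩ B).card + (A ∪ B).card :=
        (Finset.card_inter_add_card_union A B).symm
    _ ≤ (A ∩ B).card + (Finset.univ.filter (fun e => G.src e ∈ X ∪ Y ∧ G.dst e ∈ X ∪ Y)).card :=
        Nat.add_le_add_left (Finset.card_le_card h2) _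

/-- A `P(2,1)`-graph has a unique over-critical set of minimum
cardinality `X`, and the induced subgraph `G[X]` is a `(2,2)`-circuit. -/
theorem statement_4 {V E : Type} [Fintype V] [Fintype E] [DecidableEq V] [DecidableEq E]
    (G : Multigraph V E) (hG : G.IsP21) :
    ∃ X : Finset V, G.IsMinOverCritical X ∧
      (∀ Y : Finset V, G.IsMinOverCritical Y → Y = X) ∧
      (G.induce X).IsCircuit22 := by
  classical
  obtain ⟨⟨hsp, hcard⟩, e₀, hdel⟩ := hG
  have hOCuniv : (G.iCount Finset.univ : ℤ) = 2 * ((Finset.univ : Finset V).card : ℤ) - 1 := by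
    have h : G.iCount (Finset.univ : Finset V) = Fintype.card E := by
      simp [Multigraph.iCount]
    rw [h, Finset.card_univ]
    exact hcard
  obtain ⟨X, hXmem, hXmin⟩ := Finset.exists_min_image
    (Finset.univ.filter fun Z : Finset V => (G.iCount Z : ℤ) = 2 * (Z.card : ℤ) - 1)
    Finset.card ⟨Finset.univ, Finset.mem_filter.2 ⟨Finset.mem_univ _, hOCuniv⟩⟩
  have hX : (G.iCount X : ℤ) = 2 * (X.card : ℤ) - 1 := (Finset.mem_filter.1 hXmem).2
  have hXminOC : ∀ Z : Finset V, (G.iCount Z : ℤ) = 2 * (Z.card : ℤ) - 1 → X.card ≤ Z.card :=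
    fun Z hZ => hXmin Z (Finset.mem_filter.2 ⟨Finset.mem_univ _, hZ⟩)
  -- every over-critical set contains both endpoints of e₀
  have hends : ∀ Z : Finset V, (G.iCount Z : ℤ) = 2 * (Z.card : ℤ) - 1 →
      G.src e₀ ∈ Z ∧ G.dst e₀ ∈ Z := by
    intro Z hZ
    by_contra h
    have h1 : (G.deleteEdge e₀).iCount Z = G.iCount Z := iCount_deleteEdge_not G e₀ Z h
    have hpos : 0 < G.iCount Z := by omega
    obtain ⟨e', he'⟩ := Finset.card_pos.1 hpos
    rw [Finset.mem_filter] at he'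
    have hne : e' ≠ e₀ := fun hh => h (hh ▸ he'.2)
    have hle := hdel.1 Z ⟨⟨e', hne⟩, he'.2⟩
    rw [h1] at hle
    omega
  -- intersection of over-critical sets is over-critical
  have hinter : ∀ Z W : Finset V, (G.iCount Z : ℤ) = 2 * (Z.card : ℤ) - 1 →
      (G.iCount W : ℤ) = 2 * (W.card : ℤ) - 1 →
      (G.iCount (Z ∩ W) : ℤ) = 2 * ((Z ∩ W).card : ℤ) - 1 := by
    intro Z W hZ hW
    obtain ⟨hZs, hZd⟩ := hends Z hZ
    obtain ⟨hWs, hWd⟩ := hends W hW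
    have h1 : (G.iCount (Z ∩ W) : ℤ) ≤ 2 * ((Z ∩ W).card : ℤ) - 1 :=
      hsp _ ⟨e₀, Finset.mem_inter.2 ⟨hZs, hWs⟩, Finset.mem_inter.2 ⟨hZd, hWd⟩⟩
    have h2 : (G.iCount (Z ∪ W) : ℤ) ≤ 2 * ((Z ∪ W).card : ℤ) - 1 :=
      hsp _ ⟨e₀, Finset.mem_union_left _ hZs, Finset.mem_union_left _ hZd⟩
    have h3 := iCount_submodular G Z W
    have h4 := Finset.card_inter_add_card_union Z W
    omega
  have hcardEX : Fintype.card {e : E // G.src e ∈ X ∧ G.dst e ∈ X} = G.iCount X :=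
    Fintype.card_subtype _
  have hcardVX : Fintype.card {v : V // v ∈ X} = X.card := Fintype.card_coe X
  refine ⟨X, ⟨hX, hXminOC⟩, ?_, ?_⟩
  · -- uniqueness
    intro Y hY
    have h1 : (G.iCount (X ∩ Y) : ℤ) = 2 * ((X ∩ Y).card : ℤ) - 1 := hinter X Y hX hY.1
    have h2 : X.card ≤ (X ∩ Y).card := hXminOC _ h1
    have h3 : X ∩ Y = X := Finset.eq_of_subset_of_card_le Finset.inter_subset_left h2
    have hXY : X ⊆ Y := by rw [← h3]; exact Finset.inter_subset_right
    exact (Finset.eq_of_subset_of_card_le hXY (hY.2 X hX)).symm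
  · -- (2,2)-circuit
    constructor
    · rw [hcardEX, hcardVX]; exact hX
    · intro f
      constructor
      · -- Sparse 2 2
        intro Y' hY'span
        set Yv := Y'.image Subtype.val with hYv
        have hYsub : Yv ⊆ X := by
          intro v hv
          obtain ⟨w, hw, rfl⟩ := Finset.mem_image.1 hv
          exact w.2
        have hYcard : Yv.card = Y'.card := Finset.card_image_of_injective _ Subtype.val_injective
        have hmem : ∀ v : {v : V // v ∈ X}, v ∈ Y' ↔ v.1 ∈ Yv := by
          intro v
          constructor
          · exact fun h => Finset.mem_image_of_mem _ h
          · intro h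
            obtain ⟨w, hw, hwv⟩ := Finset.mem_image.1 h
            rwa [← Subtype.ext hwv]
        have key : ((G.induce X).deleteEdge f).iCount Y'
            = (Finset.univ.filter fun e : E => (G.src e ∈ Yv ∧ G.dst e ∈ Yv) ∧ e ≠ f.1).card := by
          unfold Multigraph.iCount
          apply Finset.card_bij (fun a _ => a.1.1)
          · intro a ha
            simp only [Finset.mem_filter, Finset.mem_univ, true_and] at ha ⊢
            exact ⟨⟨(hmem _).1 ha.1, (hmem _).1 ha.2⟩, fun hh => a.2 (Subtype.ext hh)⟩
          · intro a _ b _ h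
            exact Subtype.ext (Subtype.ext h)
          · intro e he
            simp only [Finset.mem_filter, Finset.mem_univ, true_and] at he
            refine ⟨⟨⟨e, hYsub he.1.1, hYsub he.1.2⟩, fun hh => he.2 (congrArg Subtype.val hh)⟩,
              ?_, rfl⟩
            simp only [Finset.mem_filter, Finset.mem_univ, true_and]
            exact ⟨(hmem _).2 he.1.1, (hmem _).2 he.1.2⟩
        rw [key]
        by_cases hf : G.src f.1 ∈ Yv ∧ G.dst f.1 ∈ Yv
        · have heq : (Finset.univ.filter fun e : E => (G.src e ∈ Yv ∧ G.dst e ∈ Yv) ∧ e ≠ f.1)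
              = (Finset.univ.filter fun e : E => G.src e ∈ Yv ∧ G.dst e ∈ Yv).erase f.1 := by
            ext e
            simp only [Finset.mem_filter, Finset.mem_univ, true_and, Finset.mem_erase]
            tauto
          have hfmem : f.1 ∈ Finset.univ.filter fun e : E => G.src e ∈ Yv ∧ G.dst e ∈ Yv :=
            Finset.mem_filter.2 ⟨Finset.mem_univ _, hf⟩
          have hc := Finset.card_erase_add_one hfmem
          have hsY : (G.iCount Yv : ℤ) ≤ 2 * (Yv.card : ℤ) - 1 := hsp Yv ⟨f.1, hf⟩
          have hiY : (Finset.univ.filter fun e : E => G.src e ∈ Yv ∧ G.dst e ∈ Yv).card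
              = G.iCount Yv := rfl
          rw [heq]
          omega
        · have heq : (Finset.univ.filter fun e : E => (G.src e ∈ Yv ∧ G.dst e ∈ Yv) ∧ e ≠ f.1)
              = Finset.univ.filter fun e : E => G.src e ∈ Yv ∧ G.dst e ∈ Yv := by
            ext e
            simp only [Finset.mem_filter, Finset.mem_univ, true_and]
            exact ⟨fun h' => h'.1, fun h' => ⟨h', fun hh => hf (hh ▸ h')⟩⟩
          rw [heq]
          obtain ⟨ee, hee⟩ := hY'span
          have hsY : (G.iCount Yv : ℤ) ≤ 2 * (Yv.card : ℤ) - 1 :=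
            hsp Yv ⟨ee.1.1, (hmem _).1 hee.1, (hmem _).1 hee.2⟩
          have hiY : (Finset.univ.filter fun e : E => G.src e ∈ Yv ∧ G.dst e ∈ Yv).card
              = G.iCount Yv := rfl
          by_contra hgt
          push_neg at hgt
          have hOCY : (G.iCount Yv : ℤ) = 2 * (Yv.card : ℤ) - 1 := by omega
          have h1 : X.card ≤ Yv.card := hXminOC Yv hOCY
          have h2 : Yv = X := Finset.eq_of_subset_of_card_le hYsub h1
          exact hf (by rw [h2]; exact f.2)
      · -- edge count
        have h1 : Fintype.card {e' : {e : E // G.src e ∈ X ∧ G.dst e ∈ X} // e' ≠ f}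
            = Fintype.card {e : E // G.src e ∈ X ∧ G.dst e ∈ X} - 1 := by
          rw [Fintype.card_subtype, Finset.filter_ne', Finset.card_erase_of_mem (Finset.mem_univ f),
            Finset.card_univ]
        rw [h1, hcardEX, hcardVX]
        omega
end

section
/- Let G = (V,E) be a P(2,1)-graph. Then: (1) G is 2-edge-connected; (2) if X ⊆ V is critical (i(X) = 2|X| − 2), then the induced subgraph G[X] is connected; (3) if X ⊆ V is semi-critical (i(X) = 2|X| − 3), then either G[X] is connected, or G[X] has exactly two connected components, with vertex sets A and B, such that A is over-critical (i(A) = 2|A| − 1) and B is critical (i(B) = 2|B| − 2). -/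
set_option linter.unusedSectionVars false
namespace Multigraph

variable {V E : Type} [Fintype V] [Fintype E] [DecidableEq V] [DecidableEq E]

lemma aux_iCount_del (G : Multigraph V E) (e₀ : E) (C : Finset V) :
    (G.deleteEdge e₀).iCount C =
      (Finset.univ.filter fun e : E => (G.src e ∈ C ∧ G.dst e ∈ C) ∧ e ≠ e₀).card := by
  apply Finset.card_bij (fun (e : {e : E // e ≠ e₀}) _ => e.1)
  · intro a ha
    simp only [iCount, deleteEdge, Finset.mem_filter, Finset.mem_univ, true_and] at ha ⊢
    exact ⟨(Finset.mem_filter.mp ha).2, a.2⟩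
  · intro a _ b _ h; exact Subtype.ext h
  · intro b hb
    simp only [Finset.mem_filter, Finset.mem_univ, true_and] at hb
    refine ⟨⟨b, hb.2⟩, ?_, rfl⟩
    simp only [iCount, deleteEdge, Finset.mem_filter, Finset.mem_univ, true_and]
    exact Finset.mem_filter.mpr ⟨Finset.mem_univ _, hb.1⟩

lemma aux_bound1 (G : Multigraph V E) (hs : G.Sparse 2 1) {C : Finset V} (hC : C.Nonempty) :
    (G.iCount C : ℤ) ≤ 2 * (C.card : ℤ) - 1 := by
  by_cases h : ∃ e, G.src e ∈ C ∧ G.dst e ∈ C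
  · exact hs C h
  · have h0 : G.iCount C = 0 := by
      rw [iCount, Finset.card_eq_zero, Finset.filter_eq_empty_iff]
      exact fun e _ he => h ⟨e, he⟩
    have := hC.card_pos
    rw [h0]; push_cast; omega

lemma aux_bound2 (G : Multigraph V E) (e₀ : E) (h22 : (G.deleteEdge e₀).Sparse 2 2)
    {C : Finset V} (hC : C.Nonempty) (hne : ¬(G.src e₀ ∈ C ∧ G.dst e₀ ∈ C)) :
    (G.iCount C : ℤ) ≤ 2 * (C.card : ℤ) - 2 := by
  by_cases h : ∃ e, G.src e ∈ C ∧ G.dst e ∈ C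
  · obtain ⟨e, he⟩ := h
    have heq : G.iCount C = (G.deleteEdge e₀).iCount C := by
      rw [aux_iCount_del, iCount]
      congr 1
      ext f
      simp only [Finset.mem_filter, Finset.mem_univ, true_and]
      constructor
      · intro hf; exact ⟨hf, fun h' => hne (h' ▸ hf)⟩
      · exact fun hf => hf.1
    rw [heq]
    refine h22 C ⟨⟨e, fun h' => hne (h' ▸ he)⟩, he⟩
  · have h0 : G.iCount C = 0 := by
      rw [iCount, Finset.card_eq_zero, Finset.filter_eq_empty_iff]
      exact fun e _ he => h ⟨e, he⟩
    have := hC.card_pos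
    rw [h0]; push_cast; omega

lemma aux_iCount_split (G : Multigraph V E) {A B X : Finset V} (hU : A ∪ B = X)
    (hd : Disjoint A B)
    (hcross : ∀ e : E, ¬(G.src e ∈ A ∧ G.dst e ∈ B) ∧ ¬(G.src e ∈ B ∧ G.dst e ∈ A)) :
    G.iCount X = G.iCount A + G.iCount B := by
  subst hU
  rw [iCount, iCount, iCount, ← Finset.card_union_of_disjoint, ← Finset.filter_or]
  · congr 1
    ext e
    simp only [Finset.mem_filter, Finset.mem_univ, true_and, Finset.mem_union]
    constructor
    · rintro ⟨hs | hs, hd' | hd'⟩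
      · exact Or.inl ⟨hs, hd'⟩
      · exact absurd ⟨hs, hd'⟩ (hcross e).1
      · exact absurd ⟨hs, hd'⟩ (hcross e).2
      · exact Or.inr ⟨hs, hd'⟩
    · rintro (⟨h1, h2⟩ | ⟨h1, h2⟩)
      · exact ⟨Or.inl h1, Or.inl h2⟩
      · exact ⟨Or.inr h1, Or.inr h2⟩
  · rw [Finset.disjoint_left]
    intro e he1 he2
    simp only [Finset.mem_filter, Finset.mem_univ, true_and] at he1 he2
    exact (Finset.disjoint_left.mp hd) he1.1 he2.1

lemma aux_adjIn_symm (G : Multigraph V E) {X : Set V} {u w : V} (h : G.AdjIn X u w) :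
    G.AdjIn X w u := by
  obtain ⟨hu, hw, e, he⟩ := h
  exact ⟨hw, hu, e, he.symm⟩

lemma aux_split (G : Multigraph V E) (X : Finset V) (h : ¬ G.ConnectedOn (X : Set V)) :
    ∃ A B : Finset V, A ∪ B = X ∧ Disjoint A B ∧ A.Nonempty ∧ B.Nonempty ∧
      (∀ e : E, ¬(G.src e ∈ A ∧ G.dst e ∈ B) ∧ ¬(G.src e ∈ B ∧ G.dst e ∈ A)) ∧
      G.ConnectedOn (A : Set V) := by
  classical
  unfold ConnectedOn at h
  push_neg at h
  obtain ⟨u, hu, w, hw, hpath⟩ := h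
  set R : V → Prop := fun v => Relation.ReflTransGen (G.AdjIn (X : Set V)) u v with hR
  set A : Finset V := X.filter R with hA
  set B : Finset V := X.filter (fun v => ¬ R v) with hB
  have hmemA : ∀ v, v ∈ A ↔ v ∈ X ∧ R v := by intro v; simp [hA]
  have hmemB : ∀ v, v ∈ B ↔ v ∈ X ∧ ¬ R v := by intro v; simp [hB]
  have hclosed : ∀ v v', v ∈ A → G.AdjIn (X : Set V) v v' → v' ∈ A := by
    intro v v' hv hadj
    have hv' : v' ∈ X := by exact_mod_cast hadj.2.1
    exact (hmemA v').mpr ⟨hv', Relation.ReflTransGen.tail ((hmemA v).mp hv).2 hadj⟩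
  refine ⟨A, B, ?_, ?_, ⟨u, ?_⟩, ⟨w, ?_⟩, ?_, ?_⟩
  · rw [hA, hB, Finset.filter_union_filter_not_eq]
  · exact Finset.disjoint_filter_filter_not X X R
  · exact (hmemA u).mpr ⟨by exact_mod_cast hu, Relation.ReflTransGen.refl⟩
  · exact (hmemB w).mpr ⟨by exact_mod_cast hw, hpath⟩
  · intro e
    constructor
    · rintro ⟨h1, h2⟩
      have hX1 : G.src e ∈ X := ((hmemA _).mp h1).1
      have hX2 : G.dst e ∈ X := ((hmemB _).mp h2).1
      have : G.dst e ∈ A := hclosed _ _ h1 ⟨by exact_mod_cast hX1, by exact_mod_cast hX2, e, Or.inl ⟨rfl, rfl⟩⟩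
      exact ((hmemB _).mp h2).2 ((hmemA _).mp this).2
    · rintro ⟨h1, h2⟩
      have hX1 : G.src e ∈ X := ((hmemB _).mp h1).1
      have hX2 : G.dst e ∈ X := ((hmemA _).mp h2).1
      have : G.src e ∈ A := hclosed _ _ h2 ⟨by exact_mod_cast hX2, by exact_mod_cast hX1, e, Or.inr ⟨rfl, rfl⟩⟩
      exact ((hmemB _).mp h1).2 ((hmemA _).mp this).2
  · -- ConnectedOn A
    have key : ∀ v, Relation.ReflTransGen (G.AdjIn (X : Set V)) u v →
        Relation.ReflTransGen (G.AdjIn (A : Set V)) u v := by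
      intro v hv
      induction hv with
      | refl => exact Relation.ReflTransGen.refl
      | @tail b c hb hadj ih =>
        have hbA : b ∈ A := (hmemA b).mpr ⟨by exact_mod_cast hadj.1, hb⟩
        have hcA : c ∈ A := hclosed _ _ hbA hadj
        exact Relation.ReflTransGen.tail ih ⟨by exact_mod_cast hbA, by exact_mod_cast hcA, hadj.2.2⟩
    intro a ha b hb
    have haA : a ∈ A := by exact_mod_cast ha
    have hbA : b ∈ A := by exact_mod_cast hb
    have h1 := key a ((hmemA a).mp haA).2
    have h2 := key b ((hmemA b).mp hbA).2
    haveI : Std.Symm (G.AdjIn (A : Set V)) := ⟨fun x y hxy => G.aux_adjIn_symm hxy⟩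
    exact (Std.Symm.symm _ _ h1).trans h2

end Multigraph
/-- Let `G` be a `P(2,1)`-graph. Then (1) `G` is 2-edge-connected;
(2) if `X` is critical then `G[X]` is connected; (3) if `X` is semi-critical then
either `G[X]` is connected or it has exactly two connected components with vertex sets
`A` and `B` where `A` is over-critical and `B` is critical. -/
theorem statement_5 {V E : Type} [Fintype V] [Fintype E] [DecidableEq V] [DecidableEq E]
    (G : Multigraph V E) (hG : G.IsP21) :
    G.TwoEdgeConnected ∧
    (∀ X : Finset V, (G.iCount X : ℤ) = 2 * (X.card : ℤ) - 2 →
      G.ConnectedOn (X : Set V)) ∧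
    (∀ X : Finset V, (G.iCount X : ℤ) = 2 * (X.card : ℤ) - 3 →
      G.ConnectedOn (X : Set V) ∨
        ∃ A B : Finset V, A ∪ B = X ∧ Disjoint A B ∧ A.Nonempty ∧ B.Nonempty ∧
          (∀ e : E, ¬(G.src e ∈ A ∧ G.dst e ∈ B) ∧ ¬(G.src e ∈ B ∧ G.dst e ∈ A)) ∧
          G.ConnectedOn (A : Set V) ∧ G.ConnectedOn (B : Set V) ∧
          (G.iCount A : ℤ) = 2 * (A.card : ℤ) - 1 ∧
          (G.iCount B : ℤ) = 2 * (B.card : ℤ) - 2) := by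
  classical
  obtain ⟨⟨hs, hcardE⟩, e₀, h22⟩ := hG
  have h22s : (G.deleteEdge e₀).Sparse 2 2 := h22.1
  have nb : ∀ (S T : Finset V), Disjoint S T → (G.src e₀ ∈ S ∧ G.dst e₀ ∈ S) →
      ¬(G.src e₀ ∈ T ∧ G.dst e₀ ∈ T) :=
    fun S T hST hS hT => Finset.disjoint_left.mp hST hS.1 hT.1
  have bound2sets : ∀ A B : Finset V, Disjoint A B → A.Nonempty → B.Nonempty →
      (G.iCount A : ℤ) + (G.iCount B : ℤ) ≤ 2 * (A.card : ℤ) + 2 * (B.card : ℤ) - 3 := by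
    intro A B hd hA hB
    by_cases hsp : G.src e₀ ∈ A ∧ G.dst e₀ ∈ A
    · have h1 := G.aux_bound1 hs hA
      have h2 := G.aux_bound2 e₀ h22s hB (nb A B hd hsp)
      linarith
    · have h1 := G.aux_bound2 e₀ h22s hA hsp
      have h2 := G.aux_bound1 hs hB
      linarith
  -- 2-edge-connectivity (path part)
  have h2e : ∀ e' : E, ∀ u w : V, Relation.ReflTransGen (G.AdjOn {e | e ≠ e'}) u w := by
    intro e' u w
    by_contra hpath
    set R : V → Prop := fun v => Relation.ReflTransGen (G.AdjOn {e | e ≠ e'}) u v with hR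
    set A : Finset V := Finset.univ.filter R with hA
    set B : Finset V := Finset.univ.filter (fun v => ¬ R v) with hB
    have hd : Disjoint A B := Finset.disjoint_filter_filter_not _ _ _
    have hU : A ∪ B = Finset.univ := Finset.filter_union_filter_not_eq _ _
    have hAne : A.Nonempty := ⟨u, by simp only [hA, Finset.mem_filter, Finset.mem_univ, true_and]; exact Relation.ReflTransGen.refl⟩
    have hBne : B.Nonempty := ⟨w, by simp only [hB, Finset.mem_filter, Finset.mem_univ, true_and]; exact hpath⟩
    have hmemA : ∀ v, v ∈ A ↔ R v := by intro v; simp [hA]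
    have hmemB : ∀ v, v ∈ B ↔ ¬ R v := by intro v; simp [hB]
    have hspan : ∀ e : E, e ≠ e' →
        (G.src e ∈ A ∧ G.dst e ∈ A) ∨ (G.src e ∈ B ∧ G.dst e ∈ B) := by
      intro e he
      by_cases hsrc : R (G.src e)
      · left
        refine ⟨(hmemA _).mpr hsrc, (hmemA _).mpr ?_⟩
        exact Relation.ReflTransGen.tail hsrc ⟨e, he, Or.inl ⟨rfl, rfl⟩⟩
      · right
        refine ⟨(hmemB _).mpr hsrc, (hmemB _).mpr ?_⟩
        intro hdst
        exact hsrc (Relation.ReflTransGen.tail hdst ⟨e, he, Or.inr ⟨rfl, rfl⟩⟩)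
    have hsub : Finset.univ.erase e' ⊆ Finset.univ.filter
        (fun e => (G.src e ∈ A ∧ G.dst e ∈ A) ∨ (G.src e ∈ B ∧ G.dst e ∈ B)) := by
      intro e he
      simp only [Finset.mem_erase, Finset.mem_univ, and_true] at he
      simp only [Finset.mem_filter, Finset.mem_univ, true_and]
      exact hspan e he
    have hfcard : (Finset.univ.filter
        (fun e => (G.src e ∈ A ∧ G.dst e ∈ A) ∨ (G.src e ∈ B ∧ G.dst e ∈ B))).card
        = G.iCount A + G.iCount B := by
      rw [Multigraph.iCount, Multigraph.iCount, Finset.filter_or, Finset.card_union_of_disjoint]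
      rw [Finset.disjoint_left]
      intro e he1 he2
      simp only [Finset.mem_filter, Finset.mem_univ, true_and] at he1 he2
      exact Finset.disjoint_left.mp hd he1.1 he2.1
    have hcardsub := Finset.card_le_card hsub
    rw [Finset.card_erase_of_mem (Finset.mem_univ e'), Finset.card_univ, hfcard] at hcardsub
    have hE1 : 1 ≤ Fintype.card E := Fintype.card_pos_iff.mpr ⟨e'⟩
    have hAB : A.card + B.card = Fintype.card V := by
      rw [← Finset.card_union_of_disjoint hd, hU, Finset.card_univ]
    have := bound2sets A B hd hAne hBne
    omega
  have hVpos : 0 < Fintype.card V := by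
    have h0 : (0 : ℤ) ≤ (Fintype.card E : ℤ) := Int.ofNat_nonneg _
    omega
  refine ⟨⟨⟨Fintype.card_pos_iff.mp hVpos, ?_⟩, h2e⟩, ?_, ?_⟩
  · -- connectivity
    intro u w
    refine Relation.ReflTransGen.mono ?_ _ _ (h2e e₀ u w)
    rintro a b ⟨e, _, he⟩
    exact ⟨e, Set.mem_univ e, he⟩
  · -- part 2
    intro X hX
    by_contra hcon
    obtain ⟨A, B, hU, hd, hA, hB, hcross, -⟩ := G.aux_split X hcon
    have hsplit := G.aux_iCount_split hU hd hcross
    have hb := bound2sets A B hd hA hB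
    have hc : A.card + B.card = X.card := by
      rw [← Finset.card_union_of_disjoint hd, hU]
    omega
  · -- part 3
    intro X hX
    by_cases hcon : G.ConnectedOn (X : Set V)
    · exact Or.inl hcon
    right
    obtain ⟨A, B, hU, hd, hA, hB, hcross, hAcon⟩ := G.aux_split X hcon
    have hsplit := G.aux_iCount_split hU hd hcross
    have hc : A.card + B.card = X.card := by
      rw [← Finset.card_union_of_disjoint hd, hU]
    have hBcon : G.ConnectedOn (B : Set V) := by
      by_contra hB'
      obtain ⟨B1, B2, hU2, hd2, hB1, hB2, hcross2, -⟩ := G.aux_split B hB'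
      have hsplit2 := G.aux_iCount_split hU2 hd2 hcross2
      have hc2 : B1.card + B2.card = B.card := by
        rw [← Finset.card_union_of_disjoint hd2, hU2]
      have hdAB1 : Disjoint A B1 := hd.mono_right (hU2 ▸ Finset.subset_union_left)
      have hdAB2 : Disjoint A B2 := hd.mono_right (hU2 ▸ Finset.subset_union_right)
      by_cases hsA : G.src e₀ ∈ A ∧ G.dst e₀ ∈ A
      · have h1 := G.aux_bound1 hs hA
        have h2 := G.aux_bound2 e₀ h22s hB1 (nb A B1 hdAB1 hsA)
        have h3 := G.aux_bound2 e₀ h22s hB2 (nb A B2 hdAB2 hsA)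
        omega
      · have h1 := G.aux_bound2 e₀ h22s hA hsA
        by_cases hsB1 : G.src e₀ ∈ B1 ∧ G.dst e₀ ∈ B1
        · have h2 := G.aux_bound1 hs hB1
          have h3 := G.aux_bound2 e₀ h22s hB2 (nb B1 B2 hd2 hsB1)
          omega
        · have h2 := G.aux_bound2 e₀ h22s hB1 hsB1
          have h3 := G.aux_bound1 hs hB2
          omega
    by_cases hsA : G.src e₀ ∈ A ∧ G.dst e₀ ∈ A
    · have h1 := G.aux_bound1 hs hA
      have h2 := G.aux_bound2 e₀ h22s hB (nb A B hd hsA)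
      exact ⟨A, B, hU, hd, hA, hB, hcross, hAcon, hBcon, by omega, by omega⟩
    · have h1 := G.aux_bound2 e₀ h22s hA hsA
      by_cases hsB : G.src e₀ ∈ B ∧ G.dst e₀ ∈ B
      · have h2 := G.aux_bound1 hs hB
        refine ⟨B, A, ?_, hd.symm, hB, hA, ?_, hBcon, hAcon, by omega, by omega⟩
        · rw [Finset.union_comm]; exact hU
        · intro e; exact ⟨(hcross e).2, (hcross e).1⟩
      · have h2 := G.aux_bound2 e₀ h22s hB hsB
        exact absurd hX (by omega)
end
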